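/- arXiv:2411.12003 — 5 statements merged into one kernel-verified Lean document; each statement's English description precedes it below -/
import Mathlib

section
/- Let B ∈ SL(2,ℝ), let v ∈ ℝ² be a nonzero vector, let x > 0, and set r = 2e^{−x/2}. If for each i = 1, 2 the angle between the lines spanned by B⁻¹eᵢ and by v is at least r (i.e. min(∠(B⁻¹eᵢ, v), π − ∠(B⁻¹eᵢ, v)) ≥ r, where ∠ is the angle between nonzero vectors), then Θ(B, v) := log(‖B‖·|v|) − log(|Bv|) ≤ x. -/
set_option maxHeartbeats 1000000


open MeasureTheory Real

noncomputable section

/-- The continuous linear map on Euclidean ℝ² induced by a 2×2 matrix. -/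
noncomputable def matCLM (B : Matrix (Fin 2) (Fin 2) ℝ) :
    EuclideanSpace ℝ (Fin 2) →L[ℝ] EuclideanSpace ℝ (Fin 2) :=
  LinearMap.toContinuousLinearMap (Matrix.toEuclideanLin B)

/-- The operator norm of a 2×2 matrix with respect to the Euclidean norm on ℝ². -/
noncomputable def matOpNorm (B : Matrix (Fin 2) (Fin 2) ℝ) : ℝ := ‖matCLM B‖

end

lemma matCLM_apply (M : Matrix (Fin 2) (Fin 2) ℝ) (w : EuclideanSpace ℝ (Fin 2)) (i : Fin 2) :
    matCLM M w i = M i 0 * w 0 + M i 1 * w 1 := by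
  simp [matCLM, Matrix.toEuclideanLin_apply, Matrix.mulVec, dotProduct, Fin.sum_univ_two]
  fin_cases i <;> rfl

lemma euclid_norm_sq (w : EuclideanSpace ℝ (Fin 2)) : ‖w‖^2 = w 0 ^2 + w 1 ^2 := by
  rw [EuclideanSpace.norm_eq, Real.sq_sqrt (by positivity)]
  simp [Fin.sum_univ_two, sq_abs]

lemma sin_angle_sq (u w : EuclideanSpace ℝ (Fin 2)) :
    (Real.sin (InnerProductGeometry.angle u w) * (‖u‖ * ‖w‖))^2
      = (u 0 * w 1 - u 1 * w 0)^2 := by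
  rw [InnerProductGeometry.sin_angle_mul_norm_mul_norm, Real.sq_sqrt ?h]
  case h =>
    simp only [PiLp.inner_apply, RCLike.inner_apply, starRingEnd_apply, star_trivial,
      Fin.sum_univ_two]
    nlinarith [sq_nonneg (u 0 * w 1 - u 1 * w 0)]
  simp only [PiLp.inner_apply, RCLike.inner_apply, starRingEnd_apply, star_trivial,
    Fin.sum_univ_two]
  ring

lemma sin_ge_of_angle (θ r : ℝ) (h0 : 0 ≤ θ) (hπ : θ ≤ π) (h1 : r ≤ θ) (h2 : r ≤ π - θ)
    (hr0 : 0 ≤ r) : Real.sin r ≤ Real.sin θ := by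
  have hmono := Real.strictMonoOn_sin.monotoneOn
  have hpi := Real.pi_pos
  rcases le_or_gt θ (π / 2) with hc | hc
  · exact hmono (by constructor <;> linarith) (by constructor <;> linarith) h1
  · rw [← Real.sin_pi_sub θ]
    exact hmono (by constructor <;> linarith) (by constructor <;> linarith) h2

lemma frob_aux (a b c d w0 w1 : ℝ) :
    (a*w0+b*w1)^2 + (c*w0+d*w1)^2 ≤ (a^2+b^2+c^2+d^2)*(w0^2+w1^2) := by
  nlinarith [sq_nonneg (a*w1-b*w0), sq_nonneg (c*w1-d*w0)]

lemma exp_aux (t p : ℝ) (hp : 0 < p) (hp4 : p ≤ 4) (ht : 0 < t) (ht1 : t ≤ 1) :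
    t * t * p ≤ 2 * (2 * t) := by nlinarith

/-- Main norm inequality, abstracted with plain real-number hypotheses. -/
lemma key_ineq (a b c d sr N Nv nv F : ℝ)
    (hdet : a * d - b * c = 1)
    (hsr : 0 < sr) (hN : 0 ≤ N) (hNv : 0 ≤ Nv) (hnv : 0 < nv)
    (hF : F = a^2 + b^2 + c^2 + d^2)
    (hlow : sr^2 * nv^2 * F ≤ Nv^2)
    (hopsq : N^2 ≤ F) :
    sr * (N * nv) ≤ Nv := by
  have hsq : (sr * (N * nv))^2 ≤ Nv^2 := by
    calc (sr * (N * nv))^2 = sr^2 * nv^2 * N^2 := by ring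
      _ ≤ sr^2 * nv^2 * F := by
          apply mul_le_mul_of_nonneg_left hopsq (by positivity)
      _ ≤ Nv^2 := hlow
  exact le_of_pow_le_pow_left₀ two_ne_zero hNv hsq

/-- **Loss-of-expansion estimate.** If the direction of `v` is at angular distance at least
`r = 2e^{−x/2}` from both `B⁻¹e₁` and `B⁻¹e₂`, then
`Θ(B,v) = log(‖B‖·|v|) − log(|Bv|) ≤ x`. -/
theorem loss_of_expansion_estimate
    (B : Matrix.SpecialLinearGroup (Fin 2) ℝ) (v : EuclideanSpace ℝ (Fin 2)) (hv : v ≠ 0)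
    (x : ℝ) (hx : 0 < x) (r : ℝ) (hr : r = 2 * Real.exp (-x / 2))
    (h : ∀ i : Fin 2,
      r ≤ min
        (InnerProductGeometry.angle
          (matCLM ((B⁻¹ : Matrix.SpecialLinearGroup (Fin 2) ℝ) : Matrix (Fin 2) (Fin 2) ℝ)
            (EuclideanSpace.single i 1)) v)
        (π - InnerProductGeometry.angle
          (matCLM ((B⁻¹ : Matrix.SpecialLinearGroup (Fin 2) ℝ) : Matrix (Fin 2) (Fin 2) ℝ)
            (EuclideanSpace.single i 1)) v)) :
    Real.log (matOpNorm (B : Matrix (Fin 2) (Fin 2) ℝ) * ‖v‖)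
      - Real.log ‖matCLM (B : Matrix (Fin 2) (Fin 2) ℝ) v‖ ≤ x := by
  have hpi := Real.pi_pos
  obtain ⟨a, ha⟩ : ∃ a, (B : Matrix (Fin 2) (Fin 2) ℝ) 0 0 = a := ⟨_, rfl⟩
  obtain ⟨b, hb⟩ : ∃ b, (B : Matrix (Fin 2) (Fin 2) ℝ) 0 1 = b := ⟨_, rfl⟩
  obtain ⟨c, hc⟩ : ∃ c, (B : Matrix (Fin 2) (Fin 2) ℝ) 1 0 = c := ⟨_, rfl⟩
  obtain ⟨d, hd⟩ : ∃ d, (B : Matrix (Fin 2) (Fin 2) ℝ) 1 1 = d := ⟨_, rfl⟩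
  have hdet : a * d - b * c = 1 := by
    have h1 : (B : Matrix (Fin 2) (Fin 2) ℝ).det = 1 := B.2
    rw [Matrix.det_fin_two, ha, hb, hc, hd] at h1; linarith
  have hMeq : ((B⁻¹ : Matrix.SpecialLinearGroup (Fin 2) ℝ) : Matrix (Fin 2) (Fin 2) ℝ)
      = !![d, -b; -c, a] := by
    rw [Matrix.SpecialLinearGroup.coe_inv, Matrix.adjugate_fin_two, ha, hb, hc, hd]
  set M := ((B⁻¹ : Matrix.SpecialLinearGroup (Fin 2) ℝ) : Matrix (Fin 2) (Fin 2) ℝ) with hM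
  have h0 := h 0
  have h1 := h 1
  rw [le_min_iff] at h0 h1
  set u0 : EuclideanSpace ℝ (Fin 2) := matCLM M (EuclideanSpace.single 0 1) with hu0
  set u1 : EuclideanSpace ℝ (Fin 2) := matCLM M (EuclideanSpace.single 1 1) with hu1
  have hu00 : u0 0 = d := by
    rw [hu0, matCLM_apply, hMeq]; simp [EuclideanSpace.single_apply]
  have hu01 : u0 1 = -c := by
    rw [hu0, matCLM_apply, hMeq]; simp [EuclideanSpace.single_apply]
  have hu10 : u1 0 = -b := by
    rw [hu1, matCLM_apply, hMeq]; simp [EuclideanSpace.single_apply]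
  have hu11 : u1 1 = a := by
    rw [hu1, matCLM_apply, hMeq]; simp [EuclideanSpace.single_apply]
  -- basic bounds on r and angles
  have hr0 : 0 < r := by rw [hr]; positivity
  set θ0 := InnerProductGeometry.angle u0 v with hθ0
  set θ1 := InnerProductGeometry.angle u1 v with hθ1
  have hθ0a : 0 ≤ θ0 := InnerProductGeometry.angle_nonneg _ _
  have hθ0b : θ0 ≤ π := InnerProductGeometry.angle_le_pi _ _
  have hθ1a : 0 ≤ θ1 := InnerProductGeometry.angle_nonneg _ _
  have hθ1b : θ1 ≤ π := InnerProductGeometry.angle_le_pi _ _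
  have hrπ : r ≤ π / 2 := by linarith [h0.1, h0.2]
  have hs0 : 0 < Real.sin r := Real.sin_pos_of_pos_of_lt_pi hr0 (by linarith)
  have hsin0 : Real.sin r ≤ Real.sin θ0 := sin_ge_of_angle _ _ hθ0a hθ0b h0.1 h0.2 hr0.le
  have hsin1 : Real.sin r ≤ Real.sin θ1 := sin_ge_of_angle _ _ hθ1a hθ1b h1.1 h1.2 hr0.le
  -- norm of Bv squared
  have hNv : ‖matCLM (B : Matrix (Fin 2) (Fin 2) ℝ) v‖^2
      = (a * v 0 + b * v 1)^2 + (c * v 0 + d * v 1)^2 := by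
    rw [euclid_norm_sq, matCLM_apply, matCLM_apply, ha, hb, hc, hd]
  have hcross0 : (Real.sin θ0 * (‖u0‖ * ‖v‖))^2 = (c * v 0 + d * v 1)^2 := by
    rw [hθ0, sin_angle_sq, hu00, hu01]; ring
  have hcross1 : (Real.sin θ1 * (‖u1‖ * ‖v‖))^2 = (a * v 0 + b * v 1)^2 := by
    rw [hθ1, sin_angle_sq, hu10, hu11]; ring
  have hu0n : ‖u0‖^2 = d^2 + c^2 := by rw [euclid_norm_sq, hu00, hu01]; ring
  have hu1n : ‖u1‖^2 = b^2 + a^2 := by rw [euclid_norm_sq, hu10, hu11]; ring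
  -- key lower bound for ‖Bv‖²
  have hlow : Real.sin r ^ 2 * ‖v‖^2 * (a^2 + b^2 + c^2 + d^2)
      ≤ ‖matCLM (B : Matrix (Fin 2) (Fin 2) ℝ) v‖^2 := by
    have e0 : (Real.sin θ0)^2 * (‖u0‖^2 * ‖v‖^2) = (c * v 0 + d * v 1)^2 := by
      rw [← hcross0]; ring
    have e1 : (Real.sin θ1)^2 * (‖u1‖^2 * ‖v‖^2) = (a * v 0 + b * v 1)^2 := by
      rw [← hcross1]; ring
    have k0 : Real.sin r ^2 * (‖u0‖^2 * ‖v‖^2) ≤ (Real.sin θ0)^2 * (‖u0‖^2 * ‖v‖^2) :=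
      mul_le_mul_of_nonneg_right (pow_le_pow_left₀ hs0.le hsin0 2)
        (mul_nonneg (sq_nonneg _) (sq_nonneg _))
    have k1 : Real.sin r ^2 * (‖u1‖^2 * ‖v‖^2) ≤ (Real.sin θ1)^2 * (‖u1‖^2 * ‖v‖^2) :=
      mul_le_mul_of_nonneg_right (pow_le_pow_left₀ hs0.le hsin1 2)
        (mul_nonneg (sq_nonneg _) (sq_nonneg _))
    have hsum : Real.sin r ^2 * ‖v‖^2 * (a^2 + b^2 + c^2 + d^2)
        = Real.sin r ^2 * (‖u1‖^2 * ‖v‖^2) + Real.sin r ^2 * (‖u0‖^2 * ‖v‖^2) := by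
      rw [hu0n, hu1n]; ring
    rw [hNv, ← e0, ← e1, hsum]
    exact add_le_add k1 k0
  -- operator norm bound by Frobenius norm
  have hF0 : (0:ℝ) ≤ a^2 + b^2 + c^2 + d^2 := by positivity
  have hop : matOpNorm (B : Matrix (Fin 2) (Fin 2) ℝ) ≤ Real.sqrt (a^2+b^2+c^2+d^2) := by
    apply ContinuousLinearMap.opNorm_le_bound _ (Real.sqrt_nonneg _)
    intro w
    have hw : ‖matCLM (B : Matrix (Fin 2) (Fin 2) ℝ) w‖^2
        ≤ (a^2+b^2+c^2+d^2) * ‖w‖^2 := by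
      rw [euclid_norm_sq, matCLM_apply, matCLM_apply, euclid_norm_sq, ha, hb, hc, hd]
      have := frob_aux a b c d (w 0) (w 1)
      linarith
    calc ‖matCLM (B : Matrix (Fin 2) (Fin 2) ℝ) w‖
        = Real.sqrt (‖matCLM (B : Matrix (Fin 2) (Fin 2) ℝ) w‖^2) :=
          (Real.sqrt_sq (norm_nonneg _)).symm
      _ ≤ Real.sqrt ((a^2+b^2+c^2+d^2) * ‖w‖^2) := Real.sqrt_le_sqrt hw
      _ = Real.sqrt (a^2+b^2+c^2+d^2) * ‖w‖ := by
          rw [Real.sqrt_mul hF0, Real.sqrt_sq (norm_nonneg _)]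
  have hNnonneg : (0:ℝ) ≤ matOpNorm (B : Matrix (Fin 2) (Fin 2) ℝ) := norm_nonneg (matCLM _)
  have hopsq : matOpNorm (B : Matrix (Fin 2) (Fin 2) ℝ)^2 ≤ a^2+b^2+c^2+d^2 := by
    have h2 := pow_le_pow_left₀ hNnonneg hop 2
    rwa [Real.sq_sqrt hF0] at h2
  -- positivity of operator norm
  have hvpos : 0 < ‖v‖ := norm_pos_iff.mpr hv
  have hNpos : 0 < matOpNorm (B : Matrix (Fin 2) (Fin 2) ℝ) := by
    have he : ‖matCLM (B : Matrix (Fin 2) (Fin 2) ℝ) (EuclideanSpace.single 0 1)‖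
        ≤ matOpNorm (B : Matrix (Fin 2) (Fin 2) ℝ) := by
      have h2 := (matCLM (B : Matrix (Fin 2) (Fin 2) ℝ)).le_opNorm (EuclideanSpace.single 0 1)
      simpa [EuclideanSpace.norm_single, matOpNorm] using h2
    have hac : (0:ℝ) < a^2 + c^2 := by
      rcases eq_or_ne a 0 with ha0 | ha0
      · rcases eq_or_ne c 0 with hc0 | hc0
        · exfalso; rw [ha0, hc0] at hdet; linarith
        · positivity
      · positivity
    have hsq : ‖matCLM (B : Matrix (Fin 2) (Fin 2) ℝ) (EuclideanSpace.single 0 1)‖^2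
        = a^2 + c^2 := by
      rw [euclid_norm_sq, matCLM_apply, matCLM_apply, ha, hc]
      simp [EuclideanSpace.single_apply]
    have hne : 0 < ‖matCLM (B : Matrix (Fin 2) (Fin 2) ℝ) (EuclideanSpace.single 0 1)‖ := by
      have h3 : (0:ℝ)^2 < ‖matCLM (B : Matrix (Fin 2) (Fin 2) ℝ) (EuclideanSpace.single 0 1)‖^2 := by
        rw [hsq]; simpa using hac
      exact lt_of_pow_lt_pow_left₀ 2 (norm_nonneg _) h3
    linarith
  -- main inequality between norms
  have hmain : Real.sin r * (matOpNorm (B : Matrix (Fin 2) (Fin 2) ℝ) * ‖v‖)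
      ≤ ‖matCLM (B : Matrix (Fin 2) (Fin 2) ℝ) v‖ :=
    key_ineq a b c d _ _ _ _ _ hdet hs0 hNnonneg (norm_nonneg _) hvpos rfl hlow hopsq
  -- sin r ≥ exp (-x)
  have hexp : Real.exp (-x) ≤ Real.sin r := by
    have hj : 2 / π * r ≤ Real.sin r := Real.mul_le_sin hr0.le hrπ
    have he1 : Real.exp (-x/2) ≤ 1 := by
      rw [Real.exp_le_one_iff]; linarith
    have he2 : Real.exp (-x) = Real.exp (-x/2) * Real.exp (-x/2) := by
      rw [← Real.exp_add]; ring_nf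
    have hp4 : π ≤ 4 := Real.pi_le_four
    have hepos : 0 < Real.exp (-x/2) := Real.exp_pos _
    have hkey : Real.exp (-x) ≤ 2 / π * r := by
      rw [he2, hr, div_mul_eq_mul_div, le_div_iff₀ hpi]
      exact exp_aux _ _ hpi Real.pi_le_four hepos he1
    linarith
  -- conclude
  have hBvpos : 0 < ‖matCLM (B : Matrix (Fin 2) (Fin 2) ℝ) v‖ :=
    lt_of_lt_of_le (by positivity) hmain
  have hlog1 : Real.log (Real.sin r) + Real.log (matOpNorm (B : Matrix (Fin 2) (Fin 2) ℝ) * ‖v‖)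
      ≤ Real.log ‖matCLM (B : Matrix (Fin 2) (Fin 2) ℝ) v‖ := by
    rw [← Real.log_mul (ne_of_gt hs0) (by positivity)]
    exact Real.log_le_log (by positivity) hmain
  have hlog2 : -x ≤ Real.log (Real.sin r) := by
    calc -x = Real.log (Real.exp (-x)) := (Real.log_exp _).symm
      _ ≤ Real.log (Real.sin r) := Real.log_le_log (Real.exp_pos _) hexp
  linarith
end

section
/- For every constant C₃ > 0 there exists ρ₀ > 0 with 3·C₃·ρ₀³ < 1/100 such that for every real random variable X with E[X] = 0, Var(X) = 1, and E|X|³ < C₃, and for every t with 0 < |t| ≤ ρ₀, one has |φ_X(t)·e^{t²/2} − 1| ≤ 1/100 (in particular φ_X(t) ≠ 0) and |Log(φ_X(t)·e^{t²/2})| ≤ 3·C₃·|t|³, where Log denotes the principal branch of the complex logarithm. -/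
open MeasureTheory ProbabilityTheory Filter Topology

universe u

/-- The standardization `(X - E X)/√(Var X)` of a real random variable. -/
noncomputable def stdize {Ω : Type u} [MeasureSpace Ω] (X : Ω → ℝ) (ω : Ω) : ℝ :=
  (X ω - ∫ ω', X ω') / Real.sqrt (variance X ℙ)

/-- The characteristic function `φ_X(t) = E[exp(itX)]` of a real random variable. -/
noncomputable def charFun' {Ω : Type u} [MeasureSpace Ω] (X : Ω → ℝ) (t : ℝ) : ℂ :=
  ∫ ω, Complex.exp (Complex.I * ((t * X ω : ℝ) : ℂ))


section TaylorAux
open MeasureTheory Complex intervalIntegral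

/-- Generic step for the Taylor bound of `e^{ix}`. -/
lemma step_bound {g g' : ℝ → ℂ} (hg : ∀ s, HasDerivAt g (g' s) s) (hc : Continuous g')
    {x : ℝ} (hx : 0 ≤ x) {n : ℕ}
    (hb : ∀ s, 0 ≤ s → ‖g' s‖ ≤ s ^ n / n.factorial) :
    ‖g x - g 0‖ ≤ x ^ (n + 1) / (n + 1).factorial := by
  have hint : ∫ s in (0:ℝ)..x, g' s = g x - g 0 :=
    integral_eq_sub_of_hasDerivAt (fun s _ => hg s) (hc.intervalIntegrable 0 x)
  rw [← hint]
  have h1 : ‖∫ s in (0:ℝ)..x, g' s‖ ≤ |∫ s in (0:ℝ)..x, s ^ n / n.factorial| := by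
    apply intervalIntegral.norm_integral_le_abs_of_norm_le
    · rw [Set.uIoc_of_le hx]
      filter_upwards [ae_restrict_mem measurableSet_Ioc] with s hs
      exact hb s hs.1.le
    · exact (by continuity : Continuous fun s : ℝ => s ^ n / (n.factorial : ℝ)).intervalIntegrable 0 x
  refine h1.trans ?_
  rw [intervalIntegral.integral_div, integral_pow]
  rw [zero_pow (by omega), sub_zero, Nat.factorial_succ, _root_.abs_of_nonneg (by positivity)]
  push_cast
  rw [div_div]

lemma hasDerivAt_expI (s : ℝ) :
    HasDerivAt (fun s : ℝ => Complex.exp (s * Complex.I)) (Complex.exp (s * Complex.I) * Complex.I) s := by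
  have h1 : HasDerivAt (fun s : ℝ => ((s : ℂ) * Complex.I)) Complex.I s := by
    simpa using (Complex.ofRealCLM.hasDerivAt (x := s)).mul_const Complex.I
  simpa using h1.cexp

lemma taylor1 {x : ℝ} (hx : 0 ≤ x) : ‖Complex.exp (x * Complex.I) - 1‖ ≤ x := by
  have := step_bound (g := fun s : ℝ => Complex.exp (s * Complex.I))
    (g' := fun s : ℝ => Complex.exp (s * Complex.I) * Complex.I)
    hasDerivAt_expI (by continuity) hx (n := 0)
    (fun s _ => by simp [Complex.norm_exp])
  simpa using this

lemma taylor2 {x : ℝ} (hx : 0 ≤ x) :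
    ‖Complex.exp (x * Complex.I) - 1 - x * Complex.I‖ ≤ x ^ 2 / 2 := by
  have := step_bound (g := fun s : ℝ => Complex.exp (s * Complex.I) - 1 - s * Complex.I)
    (g' := fun s : ℝ => (Complex.exp (s * Complex.I) - 1) * Complex.I)
    (fun s => by
      have h1 : HasDerivAt (fun s : ℝ => ((s : ℂ) * Complex.I)) Complex.I s := by
        simpa using (Complex.ofRealCLM.hasDerivAt (x := s)).mul_const Complex.I
      have := ((hasDerivAt_expI s).sub_const 1).sub h1
      exact this.congr_deriv (by ring))
    (by continuity) hx (n := 1)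
    (fun s hs => by
      simp only [norm_mul, Complex.norm_I, mul_one]
      simpa [Nat.factorial] using taylor1 hs)
  simpa using this

lemma taylor3 {x : ℝ} (hx : 0 ≤ x) :
    ‖Complex.exp (x * Complex.I) - 1 - x * Complex.I + (x : ℂ) ^ 2 / 2‖ ≤ x ^ 3 / 6 := by
  have hre : ∀ s : ℝ, HasDerivAt (fun s : ℝ => (s : ℂ)) 1 s := fun s => by
    exact Complex.ofRealCLM.hasDerivAt (x := s)
  have := step_bound
    (g := fun s : ℝ => Complex.exp (s * Complex.I) - 1 - s * Complex.I + (s : ℂ) ^ 2 / 2)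
    (g' := fun s : ℝ => (Complex.exp (s * Complex.I) - 1 - s * Complex.I) * Complex.I)
    (fun s => by
      have h1 : HasDerivAt (fun s : ℝ => ((s : ℂ) * Complex.I)) Complex.I s := by
        simpa using (hre s).mul_const Complex.I
      have h2 : HasDerivAt (fun s : ℝ => ((s : ℂ) ^ 2 / 2)) ((s : ℂ)) s := by
        have h := ((hre s).mul (hre s)).div_const 2
        simp only [one_mul, mul_one] at h
        have he : (fun s : ℝ => ((s : ℂ) ^ 2 / 2)) = fun s : ℝ => ((s : ℂ) * (s : ℂ)) / 2 := by
          funext u; ring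
        rw [he]
        exact h.congr_deriv (by ring)
      have := (((hasDerivAt_expI s).sub_const 1).sub h1).add h2
      refine this.congr_deriv ?_
      show _ = (Complex.exp (↑s * Complex.I) - 1 - ↑s * Complex.I) * Complex.I
      rw [sub_mul, sub_mul, mul_assoc, Complex.I_mul_I]
      ring)
    (by continuity) hx (n := 2)
    (fun s hs => by
      simp only [norm_mul, Complex.norm_I, mul_one]
      simpa [Nat.factorial] using taylor2 hs)
  simpa [Nat.factorial] using this

lemma taylor_all (x : ℝ) :
    ‖Complex.exp (x * Complex.I) - 1 - x * Complex.I + (x : ℂ) ^ 2 / 2‖ ≤ |x| ^ 3 / 6 := by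
  rcases le_or_gt 0 x with hx | hx
  · rw [_root_.abs_of_nonneg hx]; exact taylor3 hx
  · have hy : 0 ≤ -x := by linarith
    have h := taylor3 hy
    have h1 : (starRingEnd ℂ) (Complex.exp (((-x : ℝ) : ℂ) * Complex.I))
        = Complex.exp ((x : ℝ) * Complex.I) := by
      rw [← Complex.exp_conj]
      congr 1
      simp [Complex.conj_ofReal]
    have hc : Complex.exp (x * Complex.I) - 1 - x * Complex.I + (x : ℂ) ^ 2 / 2 =
        (starRingEnd ℂ) (Complex.exp (((-x : ℝ) : ℂ) * Complex.I) - 1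
          - ((-x : ℝ) : ℂ) * Complex.I + ((-x : ℝ) : ℂ) ^ 2 / 2) := by
      simp only [map_add, map_sub, map_mul, map_one, map_div₀, map_pow, map_ofNat,
        Complex.conj_I, Complex.conj_ofReal, h1]
      push_cast
      ring
    rw [hc, Complex.norm_conj, _root_.abs_of_neg hx]
    push_cast at h
    convert h using 2 <;> push_cast <;> ring

end TaylorAux

set_option maxHeartbeats 1000000 in
/-- **Initial bound for the bootstrapping argument.** For every `C₃ > 0` there is `ρ₀ > 0`
with `3C₃ρ₀³ < 1/100` such that every standardized random variable `X` with third absolute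
moment `< C₃` satisfies, for `0 < |t| ≤ ρ₀`: `|φ_X(t)e^{t²/2} − 1| ≤ 1/100`, `φ_X(t) ≠ 0`, and
`|Log(φ_X(t)e^{t²/2})| ≤ 3C₃|t|³`. -/
theorem charFun_initial_log_bound (C₃ : ℝ) (hC₃ : 0 < C₃) :
    ∃ ρ₀ > (0 : ℝ), 3 * C₃ * ρ₀ ^ 3 < 1 / 100 ∧
      ∀ (Ω : Type u) [MeasureSpace Ω], IsProbabilityMeasure (ℙ : Measure Ω) →
      ∀ X : Ω → ℝ, Measurable X → Integrable (fun ω => |X ω| ^ 3) ℙ →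
        (∫ ω, X ω) = 0 → variance X ℙ = 1 → (∫ ω, |X ω| ^ 3) < C₃ →
        ∀ t : ℝ, 0 < |t| → |t| ≤ ρ₀ →
          ‖charFun' X t * Complex.exp ((t ^ 2 / 2 : ℝ) : ℂ) - 1‖ ≤ 1 / 100 ∧
          charFun' X t ≠ 0 ∧
          ‖Complex.log (charFun' X t * Complex.exp ((t ^ 2 / 2 : ℝ) : ℂ))‖
            ≤ 3 * C₃ * |t| ^ 3 := by
  set ρ₀ : ℝ := min (min 1 C₃) ((1 / (600 * C₃)) ^ ((1 : ℝ) / 3)) with hρ₀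
  have hρpos : 0 < ρ₀ := by
    refine lt_min (lt_min one_pos hC₃) (Real.rpow_pos_of_pos (by positivity) _)
  have hcube : ((1 / (600 * C₃)) ^ ((1 : ℝ) / 3)) ^ 3 = 1 / (600 * C₃) := by
    rw [← Real.rpow_natCast ((1 / (600 * C₃)) ^ ((1 : ℝ) / 3)) 3,
      ← Real.rpow_mul (by positivity)]
    norm_num
  have hρ3 : ρ₀ ^ 3 ≤ 1 / (600 * C₃) := by
    rw [← hcube]
    exact pow_le_pow_left₀ hρpos.le (min_le_right _ _) 3
  refine ⟨ρ₀, hρpos, ?_, ?_⟩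
  · calc 3 * C₃ * ρ₀ ^ 3 ≤ 3 * C₃ * (1 / (600 * C₃)) := by
          gcongr
      _ = 1 / 200 := by field_simp; ring
      _ < 1 / 100 := by norm_num
  intro Ω _ hprob X hmeas hX3 hEX hVar hC3lt t ht0 htρ
  set s := |t| with hs
  have hs0 : 0 ≤ s := abs_nonneg t
  have hs1 : s ≤ 1 := le_trans htρ (le_trans (min_le_left _ _) (min_le_left _ _))
  have hsC : s ≤ C₃ := le_trans htρ (le_trans (min_le_left _ _) (min_le_right _ _))
  have hsmall : C₃ * s ^ 3 ≤ 1 / 600 := by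
    have h2 : s ^ 3 ≤ 1 / (600 * C₃) := le_trans (pow_le_pow_left₀ hs0 htρ 3) hρ3
    calc C₃ * s ^ 3 ≤ C₃ * (1 / (600 * C₃)) := by gcongr
      _ = 1 / 600 := by field_simp
  -- integrability
  have hXm : AEStronglyMeasurable X ℙ := hmeas.aestronglyMeasurable
  have hbound : Integrable (fun ω => 1 + |X ω| ^ 3) ℙ := (integrable_const 1).add hX3
  have hX1 : Integrable X ℙ := by
    refine hbound.mono' hXm (ae_of_all _ fun ω => ?_)
    simp only [Real.norm_eq_abs]
    nlinarith [abs_nonneg (X ω), sq_nonneg (|X ω| - 1),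
      mul_nonneg (abs_nonneg (X ω)) (sq_nonneg (|X ω| - 1))]
  have hX2 : Integrable (fun ω => X ω ^ 2) ℙ := by
    refine hbound.mono' ((hmeas.pow_const 2).aestronglyMeasurable) (ae_of_all _ fun ω => ?_)
    have h1 : ‖X ω ^ 2‖ = |X ω| ^ 2 := by
      rw [Real.norm_eq_abs, abs_pow]
    rw [h1]
    nlinarith [abs_nonneg (X ω), sq_nonneg (|X ω| - 1),
      mul_nonneg (abs_nonneg (X ω)) (sq_nonneg (|X ω| - 1))]
  have hEX2 : (∫ ω, X ω ^ 2) = 1 := by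
    have hmem : MemLp X 2 ℙ := (memLp_two_iff_integrable_sq hXm).2 hX2
    have h := variance_eq_sub hmem
    rw [hVar, hEX] at h
    simp only [Pi.pow_apply] at h
    nlinarith [h]
  -- integrability of the pieces
  have i1 : Integrable (fun ω => Complex.exp (((t * X ω : ℝ) : ℂ) * Complex.I)) ℙ := by
    refine (integrable_const (1 : ℝ)).mono' ?_ (ae_of_all _ fun ω => ?_)
    · exact (Complex.measurable_exp.comp
        ((Complex.measurable_ofReal.comp ((measurable_const.mul hmeas))).mul_const
          Complex.I)).aestronglyMeasurable
    · rw [Complex.norm_exp]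
      simp
  have i2 : Integrable (fun ω => ((t * X ω : ℝ) : ℂ) * Complex.I) ℙ :=
    ((hX1.const_mul t).ofReal).mul_const Complex.I
  have i3r : Integrable (fun ω => (t * X ω) ^ 2 / 2) ℙ :=
    (hX2.const_mul (t ^ 2 / 2)).congr (ae_of_all _ fun ω => by ring)
  have i3 : Integrable (fun ω => ((t * X ω : ℝ) : ℂ) ^ 2 / 2) ℙ :=
    (i3r.ofReal).congr (ae_of_all _ fun ω => by norm_cast)
  -- the characteristic function in the convenient form
  have hchar : charFun' X t = ∫ ω, Complex.exp (((t * X ω : ℝ) : ℂ) * Complex.I) := by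
    unfold charFun'
    simp_rw [mul_comm]
  -- value of the integral of the Taylor remainder
  have hint : (∫ ω, (Complex.exp (((t * X ω : ℝ) : ℂ) * Complex.I) - 1
      - ((t * X ω : ℝ) : ℂ) * Complex.I + ((t * X ω : ℝ) : ℂ) ^ 2 / 2))
      = charFun' X t - 1 + ((t ^ 2 / 2 : ℝ) : ℂ) := by
    have i01 : Integrable (fun ω => Complex.exp (((t * X ω : ℝ) : ℂ) * Complex.I) - 1) ℙ :=
      i1.sub (integrable_const 1)
    have i012 : Integrable (fun ω => Complex.exp (((t * X ω : ℝ) : ℂ) * Complex.I) - 1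
        - ((t * X ω : ℝ) : ℂ) * Complex.I) ℙ := i01.sub i2
    rw [integral_add i012 i3, integral_sub i01 i2,
      integral_sub i1 (integrable_const 1), integral_const]
    have e2 : (∫ ω, ((t * X ω : ℝ) : ℂ) * Complex.I) = 0 := by
      rw [integral_mul_const]
      have h0 : (∫ ω, ((t * X ω : ℝ) : ℂ)) = ((∫ ω, t * X ω : ℝ) : ℂ) := integral_ofReal
      rw [h0, MeasureTheory.integral_const_mul, hEX]
      simp
    have e3 : (∫ ω, ((t * X ω : ℝ) : ℂ) ^ 2 / 2) = ((t ^ 2 / 2 : ℝ) : ℂ) := by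
      have h1 : (fun ω => ((t * X ω : ℝ) : ℂ) ^ 2 / 2)
          = fun ω => (((t * X ω) ^ 2 / 2 : ℝ) : ℂ) := by
        funext ω; push_cast; ring
      have h0 : (∫ ω, (((t * X ω) ^ 2 / 2 : ℝ) : ℂ))
          = ((∫ ω, (t * X ω) ^ 2 / 2 : ℝ) : ℂ) := integral_ofReal
      have h2 : (∫ ω, (t * X ω) ^ 2 / 2) = t ^ 2 / 2 := by
        calc (∫ ω, (t * X ω) ^ 2 / 2) = ∫ ω, t ^ 2 / 2 * X ω ^ 2 := by
              congr 1; funext ω; ring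
          _ = t ^ 2 / 2 * ∫ ω, X ω ^ 2 := MeasureTheory.integral_const_mul _ _
          _ = t ^ 2 / 2 := by rw [hEX2]; ring
      rw [h1, h0, h2]
    rw [e2, e3, hchar]
    simp
  -- the key estimate
  have key : ‖charFun' X t - 1 + ((t ^ 2 / 2 : ℝ) : ℂ)‖ ≤ s ^ 3 * C₃ / 6 := by
    rw [← hint]
    have hb : Integrable (fun ω => s ^ 3 / 6 * |X ω| ^ 3) ℙ := hX3.const_mul _
    refine le_trans (norm_integral_le_of_norm_le hb (ae_of_all _ fun ω => ?_)) ?_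
    · have h := taylor_all (t * X ω)
      refine le_trans h (le_of_eq ?_)
      rw [abs_mul, mul_pow]
      ring
    · rw [MeasureTheory.integral_const_mul]
      have := hC3lt.le
      calc s ^ 3 / 6 * ∫ ω, |X ω| ^ 3 ≤ s ^ 3 / 6 * C₃ := by
            gcongr
        _ = s ^ 3 * C₃ / 6 := by ring
  -- real exponential bound
  have hts : t ^ 2 = s ^ 2 := (sq_abs t).symm
  have hxle : |(-(t ^ 2 / 2))| ≤ 1 := by
    rw [abs_neg, abs_of_nonneg (by positivity)]
    nlinarith [hts, hs1, hs0]
  have hE2 : |Real.exp (-(t ^ 2 / 2)) - (1 - t ^ 2 / 2)| ≤ 3 / 16 * t ^ 4 := by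
    have hE := Real.exp_bound hxle (by norm_num : 0 < 2)
    simp only [Finset.sum_range_succ, Finset.sum_range_zero, Nat.factorial] at hE
    norm_num at hE
    have he : (1 - t ^ 2 / 2 : ℝ) = 1 + -(t ^ 2 / 2) := by ring
    rw [he]
    calc |Real.exp (-(t ^ 2 / 2)) - (1 + -(t ^ 2 / 2))|
        ≤ (t ^ 2 / 2) ^ 2 * (3 / 4) := hE
      _ = 3 / 16 * t ^ 4 := by ring
  -- distance to the Gaussian characteristic function
  have hD : ‖charFun' X t - ((Real.exp (-(t ^ 2 / 2)) : ℝ) : ℂ)‖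
      ≤ s ^ 3 * C₃ / 6 + 3 / 16 * t ^ 4 := by
    have hsplit : charFun' X t - ((Real.exp (-(t ^ 2 / 2)) : ℝ) : ℂ)
        = (charFun' X t - 1 + ((t ^ 2 / 2 : ℝ) : ℂ))
          + (((1 - t ^ 2 / 2 : ℝ) : ℂ) - ((Real.exp (-(t ^ 2 / 2)) : ℝ) : ℂ)) := by
      push_cast; ring
    rw [hsplit]
    refine le_trans (norm_add_le _ _) (add_le_add key ?_)
    rw [← Complex.ofReal_sub, Complex.norm_real]
    rw [Real.norm_eq_abs, abs_sub_comm]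
    exact hE2
  set z := charFun' X t * Complex.exp ((t ^ 2 / 2 : ℝ) : ℂ) with hzdef
  have hz1 : z - 1 = (charFun' X t - ((Real.exp (-(t ^ 2 / 2)) : ℝ) : ℂ))
      * Complex.exp ((t ^ 2 / 2 : ℝ) : ℂ) := by
    rw [sub_mul, hzdef]
    congr 1
    rw [Complex.ofReal_exp, ← Complex.exp_add]
    have he : ((-(t ^ 2 / 2) : ℝ) : ℂ) + ((t ^ 2 / 2 : ℝ) : ℂ) = 0 := by push_cast; ring
    rw [he, Complex.exp_zero]
  have hnexp : ‖Complex.exp ((t ^ 2 / 2 : ℝ) : ℂ)‖ = Real.exp (t ^ 2 / 2) := by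
    rw [Complex.norm_exp, Complex.ofReal_re]
  have hexple : Real.exp (t ^ 2 / 2) ≤ 2 := by
    have ha : t ^ 2 / 2 ≤ 1 / 2 := by nlinarith [hts, hs1, hs0]
    have hb := Real.exp_le_exp.2 ha
    have hc : Real.exp (1 / 2) ^ 2 = Real.exp 1 := by
      rw [sq, ← Real.exp_add]; norm_num
    have hd := Real.exp_one_lt_d9
    nlinarith [Real.exp_pos (1 / 2), sq_nonneg (Real.exp (1 / 2) - 2)]
  have hz1n : ‖z - 1‖ ≤ (s ^ 3 * C₃ / 6 + 3 / 16 * t ^ 4) * 2 := by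
    rw [hz1, norm_mul, hnexp]
    refine mul_le_mul hD hexple (Real.exp_pos _).le ?_
    positivity
  have ht4 : t ^ 4 ≤ C₃ * s ^ 3 := by
    have h4 : t ^ 4 = s * s ^ 3 := by
      have : s ^ 2 = t ^ 2 := sq_abs t
      nlinarith [this]
    rw [h4]
    exact mul_le_mul_of_nonneg_right hsC (by positivity)
  have hfinal : ‖z - 1‖ ≤ 17 / 24 * (C₃ * s ^ 3) := by nlinarith [hz1n, ht4]
  have h100 : ‖z - 1‖ ≤ 1 / 100 := by nlinarith [hfinal, hsmall, hs0, hC₃]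
  refine ⟨h100, ?_, ?_⟩
  · intro h0
    have hz0 : z = 0 := by rw [hzdef, h0, zero_mul]
    rw [hz0] at h100
    norm_num at h100
  · have hhalf : ‖z - 1‖ ≤ 1 / 2 := by linarith
    have hlog := Complex.norm_log_one_add_half_le_self hhalf
    rw [add_sub_cancel] at hlog
    calc ‖Complex.log z‖ ≤ 3 / 2 * ‖z - 1‖ := hlog
      _ ≤ 3 / 2 * (17 / 24 * (C₃ * s ^ 3)) := by
          refine mul_le_mul_of_nonneg_left hfinal (by norm_num)
      _ ≤ 3 * C₃ * s ^ 3 := by nlinarith [hs0, hC₃, pow_nonneg hs0 3]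
end

section
/- Let C > 1 and set L = √((C+1)/C) and λ = √(C/(C+1)), so λ = 1/L < 1 < L. Let ξ and ξ' be independent real random variables with finite positive variances satisfying C⁻¹ < Var(ξ)/Var(ξ') < C, let η, η' be their standardizations and η'' the standardization of ξ + ξ', and set c = √(Var ξ/(Var ξ + Var ξ')), c' = √(Var ξ'/(Var ξ + Var ξ')). Suppose ρ > 0, N, N' ≥ 0, and f, f' : ℝ → ℂ are continuous functions with f(0) = f'(0) = 0 such that for all |t| ≤ ρ one has exp(f(t)) = φ_η(t)·e^{t²/2}, exp(f'(t)) = φ_{η'}(t)·e^{t²/2}, |f(t)| ≤ N·|t|³, and |f'(t)| ≤ N'·|t|³. Then the function g(t) = f(c·t) + f'(c'·t) is continuous, satisfies g(0) = 0, and for all |t| ≤ L·ρ one has exp(g(t)) = φ_{η''}(t)·e^{t²/2} and |g(t)| ≤ λ·max(N, N')·|t|³. -/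
open MeasureTheory ProbabilityTheory Filter Topology

universe u

lemma indep_integral_exp_mul {Ω : Type u} [MeasureSpace Ω]
    [IsProbabilityMeasure (ℙ : Measure Ω)] {X Y : Ω → ℝ}
    (hX : Measurable X) (hY : Measurable Y) (h : IndepFun X Y ℙ) :
    (∫ ω, Complex.exp (Complex.I * (X ω : ℂ)) * Complex.exp (Complex.I * (Y ω : ℂ)))
      = (∫ ω, Complex.exp (Complex.I * (X ω : ℂ)))
        * ∫ ω, Complex.exp (Complex.I * (Y ω : ℂ)) := by
  have bnd : ∀ p : Ω → ℝ, Measurable p → (∀ ω, |p ω| ≤ 1) → Integrable p ℙ := fun p hp hb =>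
    (integrable_const (1 : ℝ)).mono' hp.aestronglyMeasurable
      (ae_of_all _ (by simpa [Real.norm_eq_abs] using hb))
  set a : Ω → ℝ := fun ω => Real.cos (X ω) with ha
  set b : Ω → ℝ := fun ω => Real.sin (X ω) with hb
  set a' : Ω → ℝ := fun ω => Real.cos (Y ω) with ha'
  set b' : Ω → ℝ := fun ω => Real.sin (Y ω) with hb'
  have ia : Integrable a ℙ := bnd a (Real.measurable_cos.comp hX) fun ω => Real.abs_cos_le_one _
  have ib : Integrable b ℙ := bnd b (Real.measurable_sin.comp hX) fun ω => Real.abs_sin_le_one _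
  have ia' : Integrable a' ℙ := bnd a' (Real.measurable_cos.comp hY) fun ω => Real.abs_cos_le_one _
  have ib' : Integrable b' ℙ := bnd b' (Real.measurable_sin.comp hY) fun ω => Real.abs_sin_le_one _
  have hiaa : IndepFun a a' ℙ := h.comp Real.measurable_cos Real.measurable_cos
  have hiab : IndepFun a b' ℙ := h.comp Real.measurable_cos Real.measurable_sin
  have hiba : IndepFun b a' ℙ := h.comp Real.measurable_sin Real.measurable_cos
  have hibb : IndepFun b b' ℙ := h.comp Real.measurable_sin Real.measurable_sin
  have e1 : (∫ ω, a ω * a' ω) = (∫ ω, a ω) * ∫ ω, a' ω := hiaa.integral_fun_mul_eq_mul_integral ia.aestronglyMeasurable ia'.aestronglyMeasurable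
  have e2 : (∫ ω, a ω * b' ω) = (∫ ω, a ω) * ∫ ω, b' ω := hiab.integral_fun_mul_eq_mul_integral ia.aestronglyMeasurable ib'.aestronglyMeasurable
  have e3 : (∫ ω, b ω * a' ω) = (∫ ω, b ω) * ∫ ω, a' ω := hiba.integral_fun_mul_eq_mul_integral ib.aestronglyMeasurable ia'.aestronglyMeasurable
  have e4 : (∫ ω, b ω * b' ω) = (∫ ω, b ω) * ∫ ω, b' ω := hibb.integral_fun_mul_eq_mul_integral ib.aestronglyMeasurable ib'.aestronglyMeasurable
  have imul : ∀ p q : Ω → ℝ, Integrable p ℙ → Integrable q ℙ → (∀ ω, |p ω| ≤ 1) →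
      (∀ ω, |q ω| ≤ 1) → Measurable p → Measurable q →
      Integrable (fun ω => p ω * q ω) ℙ := by
    intro p q _ _ hp hq mp mq
    exact bnd _ (mp.mul mq) fun ω => by
      rw [abs_mul]
      exact mul_le_one₀ (hp ω) (abs_nonneg _) (hq ω)
  have iaa : Integrable (fun ω => a ω * a' ω) ℙ := imul _ _ ia ia'
    (fun ω => Real.abs_cos_le_one _) (fun ω => Real.abs_cos_le_one _)
    (Real.measurable_cos.comp hX) (Real.measurable_cos.comp hY)
  have iab : Integrable (fun ω => a ω * b' ω) ℙ := imul _ _ ia ib'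
    (fun ω => Real.abs_cos_le_one _) (fun ω => Real.abs_sin_le_one _)
    (Real.measurable_cos.comp hX) (Real.measurable_sin.comp hY)
  have iba : Integrable (fun ω => b ω * a' ω) ℙ := imul _ _ ib ia'
    (fun ω => Real.abs_sin_le_one _) (fun ω => Real.abs_cos_le_one _)
    (Real.measurable_sin.comp hX) (Real.measurable_cos.comp hY)
  have ibb : Integrable (fun ω => b ω * b' ω) ℙ := imul _ _ ib ib'
    (fun ω => Real.abs_sin_le_one _) (fun ω => Real.abs_sin_le_one _)
    (Real.measurable_sin.comp hX) (Real.measurable_sin.comp hY)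
  have expand : ∀ x : ℝ, Complex.exp (Complex.I * (x : ℂ))
      = ((Real.cos x : ℝ) : ℂ) + ((Real.sin x : ℝ) : ℂ) * Complex.I := by
    intro x
    rw [mul_comm, Complex.exp_mul_I, Complex.ofReal_cos, Complex.ofReal_sin]
  have hL : (fun ω => Complex.exp (Complex.I * (X ω : ℂ)) * Complex.exp (Complex.I * (Y ω : ℂ)))
      = fun ω => ((a ω * a' ω - b ω * b' ω : ℝ) : ℂ)
          + ((a ω * b' ω + b ω * a' ω : ℝ) : ℂ) * Complex.I := by
    funext ω
    rw [expand, expand]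
    simp only [Complex.ofReal_sub, Complex.ofReal_add, Complex.ofReal_mul]
    linear_combination ((b ω : ℂ) * (b' ω : ℂ)) * Complex.I_sq
  have hX1 : (fun ω => Complex.exp (Complex.I * (X ω : ℂ)))
      = fun ω => ((a ω : ℝ) : ℂ) + ((b ω : ℝ) : ℂ) * Complex.I := by
    funext ω; rw [expand]
  have hY1 : (fun ω => Complex.exp (Complex.I * (Y ω : ℂ)))
      = fun ω => ((a' ω : ℝ) : ℂ) + ((b' ω : ℝ) : ℂ) * Complex.I := by
    funext ω; rw [expand]
  have j1 : Integrable (fun ω => ((a ω * a' ω - b ω * b' ω : ℝ) : ℂ)) ℙ := (iaa.sub ibb).ofReal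
  have j2 : Integrable (fun ω => ((a ω * b' ω + b ω * a' ω : ℝ) : ℂ) * Complex.I) ℙ :=
    ((iab.add iba).ofReal).mul_const Complex.I
  have j3 : Integrable (fun ω => ((a ω : ℝ) : ℂ)) ℙ := ia.ofReal
  have j4 : Integrable (fun ω => ((b ω : ℝ) : ℂ) * Complex.I) ℙ := (ib.ofReal).mul_const Complex.I
  have j5 : Integrable (fun ω => ((a' ω : ℝ) : ℂ)) ℙ := ia'.ofReal
  have j6 : Integrable (fun ω => ((b' ω : ℝ) : ℂ) * Complex.I) ℙ := (ib'.ofReal).mul_const Complex.I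
  have oflem : ∀ p : Ω → ℝ, Integrable p ℙ →
      (∫ ω, ((p ω : ℝ) : ℂ)) = (((∫ ω, p ω) : ℝ) : ℂ) := by
    intro p hp
    calc (∫ ω, ((p ω : ℝ) : ℂ)) = ∫ ω, Complex.ofRealCLM (p ω) := by
          simp only [Complex.ofRealCLM_apply]
      _ = Complex.ofRealCLM (∫ ω, p ω) := ContinuousLinearMap.integral_comp_comm _ hp
      _ = (((∫ ω, p ω) : ℝ) : ℂ) := by simp only [Complex.ofRealCLM_apply]
  rw [hL, hX1, hY1]
  rw [integral_add j1 j2, integral_add j3 j4, integral_add j5 j6,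
    integral_mul_const, integral_mul_const, integral_mul_const,
    oflem (fun ω => a ω * a' ω - b ω * b' ω) (iaa.sub ibb),
    oflem (fun ω => a ω * b' ω + b ω * a' ω) (iab.add iba),
    oflem a ia, oflem b ib, oflem a' ia', oflem b' ib',
    integral_sub iaa ibb, integral_add iab iba, e1, e2, e3, e4]
  push_cast
  linear_combination (-((∫ ω, b ω : ℝ) : ℂ)) * ((∫ ω, b' ω : ℝ) : ℂ) * Complex.I_sq

set_option maxHeartbeats 1000000 in
/-- **Contraction of the non-Gaussianity bound for a sum of two independent variables.** -/
theorem nonGaussianity_contraction {Ω : Type u} [MeasureSpace Ω]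
    [IsProbabilityMeasure (ℙ : Measure Ω)]
    (C : ℝ) (hC : 1 < C)
    (L lam : ℝ) (hL : L = Real.sqrt ((C + 1) / C)) (hlam : lam = Real.sqrt (C / (C + 1)))
    (ξ ξ' : Ω → ℝ) (hmξ : Measurable ξ) (hmξ' : Measurable ξ')
    (h2ξ : MemLp ξ 2 ℙ) (h2ξ' : MemLp ξ' 2 ℙ)
    (hvξ : 0 < variance ξ ℙ) (hvξ' : 0 < variance ξ' ℙ)
    (hInd : IndepFun ξ ξ' ℙ)
    (hratio₁ : C⁻¹ < variance ξ ℙ / variance ξ' ℙ)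
    (hratio₂ : variance ξ ℙ / variance ξ' ℙ < C)
    (c c' : ℝ)
    (hc : c = Real.sqrt (variance ξ ℙ / (variance ξ ℙ + variance ξ' ℙ)))
    (hc' : c' = Real.sqrt (variance ξ' ℙ / (variance ξ ℙ + variance ξ' ℙ)))
    (ρ N N' : ℝ) (hρ : 0 < ρ) (hN : 0 ≤ N) (hN' : 0 ≤ N')
    (f f' : ℝ → ℂ) (hfc : Continuous f) (hf'c : Continuous f')
    (hf0 : f 0 = 0) (hf'0 : f' 0 = 0)
    (hfe : ∀ t : ℝ, |t| ≤ ρ →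
      Complex.exp (f t) = charFun' (stdize ξ) t * Complex.exp ((t ^ 2 / 2 : ℝ) : ℂ))
    (hfb : ∀ t : ℝ, |t| ≤ ρ → ‖f t‖ ≤ N * |t| ^ 3)
    (hf'e : ∀ t : ℝ, |t| ≤ ρ →
      Complex.exp (f' t) = charFun' (stdize ξ') t * Complex.exp ((t ^ 2 / 2 : ℝ) : ℂ))
    (hf'b : ∀ t : ℝ, |t| ≤ ρ → ‖f' t‖ ≤ N' * |t| ^ 3) :
    Continuous (fun t : ℝ => f (c * t) + f' (c' * t)) ∧
    f (c * 0) + f' (c' * 0) = 0 ∧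
    ∀ t : ℝ, |t| ≤ L * ρ →
      Complex.exp (f (c * t) + f' (c' * t))
        = charFun' (stdize (fun ω => ξ ω + ξ' ω)) t * Complex.exp ((t ^ 2 / 2 : ℝ) : ℂ) ∧
      ‖f (c * t) + f' (c' * t)‖ ≤ lam * max N N' * |t| ^ 3 := by
  have hCpos : (0 : ℝ) < C := lt_trans one_pos hC
  have hS : 0 < variance ξ ℙ + variance ξ' ℙ := by linarith
  have hc0 : 0 ≤ c := hc ▸ Real.sqrt_nonneg _
  have hc'0 : 0 ≤ c' := hc' ▸ Real.sqrt_nonneg _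
  have hc2 : c ^ 2 = variance ξ ℙ / (variance ξ ℙ + variance ξ' ℙ) := by
    rw [hc, Real.sq_sqrt (by positivity)]
  have hc'2 : c' ^ 2 = variance ξ' ℙ / (variance ξ ℙ + variance ξ' ℙ) := by
    rw [hc', Real.sq_sqrt (by positivity)]
  have hsum : c ^ 2 + c' ^ 2 = 1 := by
    rw [hc2, hc'2]
    field_simp
  have hVltCV' : variance ξ ℙ < C * variance ξ' ℙ := by
    have h1 := (div_lt_iff₀ hvξ').1 hratio₂
    linarith
  have hV'ltCV : variance ξ' ℙ < C * variance ξ ℙ := by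
    have h1 := (lt_div_iff₀ hvξ').1 hratio₁
    have h2 : C * C⁻¹ = 1 := mul_inv_cancel₀ (ne_of_gt hCpos)
    nlinarith [mul_lt_mul_of_pos_left h1 hCpos]
  have hclam : c ≤ lam := by
    rw [hc, hlam]
    apply Real.sqrt_le_sqrt
    rw [div_le_div_iff₀ hS (by linarith)]
    nlinarith
  have hc'lam : c' ≤ lam := by
    rw [hc', hlam]
    apply Real.sqrt_le_sqrt
    rw [div_le_div_iff₀ hS (by linarith)]
    nlinarith
  have hlam0 : 0 < lam := by
    rw [hlam]; positivity
  have hlamL : lam * L = 1 := by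
    rw [hlam, hL, ← Real.sqrt_mul (by positivity)]
    rw [show C / (C + 1) * ((C + 1) / C) = 1 by field_simp]
    exact Real.sqrt_one
  have iξ : Integrable ξ ℙ := h2ξ.integrable one_le_two
  have iξ' : Integrable ξ' ℙ := h2ξ'.integrable one_le_two
  have hVadd : variance (fun ω => ξ ω + ξ' ω) ℙ = variance ξ ℙ + variance ξ' ℙ :=
    hInd.variance_add h2ξ h2ξ'
  have hsV : Real.sqrt (variance ξ ℙ) ≠ 0 := ne_of_gt (Real.sqrt_pos.2 hvξ)
  have hsV' : Real.sqrt (variance ξ' ℙ) ≠ 0 := ne_of_gt (Real.sqrt_pos.2 hvξ')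
  have hsS : Real.sqrt (variance ξ ℙ + variance ξ' ℙ) ≠ 0 := ne_of_gt (Real.sqrt_pos.2 hS)
  have hstd : stdize (fun ω => ξ ω + ξ' ω) = fun ω => c * stdize ξ ω + c' * stdize ξ' ω := by
    funext ω
    simp only [stdize]
    rw [hVadd, integral_add iξ iξ', hc, hc', Real.sqrt_div hvξ.le, Real.sqrt_div hvξ'.le]
    field_simp
    ring
  have hmη : Measurable (stdize ξ) := (hmξ.sub_const _).div_const _
  have hmη' : Measurable (stdize ξ') := (hmξ'.sub_const _).div_const _
  have hchar : ∀ s : ℝ, charFun' (stdize (fun ω => ξ ω + ξ' ω)) s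
      = charFun' (stdize ξ) (c * s) * charFun' (stdize ξ') (c' * s) := by
    intro s
    simp only [charFun', hstd]
    have hpt : (fun ω => Complex.exp (Complex.I *
          ((s * (c * stdize ξ ω + c' * stdize ξ' ω) : ℝ) : ℂ)))
        = fun ω => Complex.exp (Complex.I * (((c * s) * stdize ξ ω : ℝ) : ℂ))
            * Complex.exp (Complex.I * (((c' * s) * stdize ξ' ω : ℝ) : ℂ)) := by
      funext ω
      rw [← Complex.exp_add]
      congr 1
      push_cast
      ring
    rw [hpt]
    have hmX : Measurable (fun ω => (c * s) * stdize ξ ω) := hmη.const_mul _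
    have hmY : Measurable (fun ω => (c' * s) * stdize ξ' ω) := hmη'.const_mul _
    have hIXY : IndepFun (fun ω => (c * s) * stdize ξ ω) (fun ω => (c' * s) * stdize ξ' ω) ℙ :=
      hInd.comp
        (measurable_const.mul ((measurable_id.sub_const _).div_const _) : Measurable fun x : ℝ =>
          (c * s) * ((x - ∫ ω', ξ ω') / Real.sqrt (variance ξ ℙ)))
        (measurable_const.mul ((measurable_id.sub_const _).div_const _) : Measurable fun x : ℝ =>
          (c' * s) * ((x - ∫ ω', ξ' ω') / Real.sqrt (variance ξ' ℙ)))
    have := indep_integral_exp_mul hmX hmY hIXY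
    simpa using this
  refine ⟨(hfc.comp (continuous_const.mul continuous_id)).add
      (hf'c.comp (continuous_const.mul continuous_id)), by simp [hf0, hf'0], ?_⟩
  intro t ht
  have habs : |t| ≤ L * ρ := ht
  have hct : |c * t| ≤ ρ := by
    rw [abs_mul, abs_of_nonneg hc0]
    calc c * |t| ≤ lam * (L * ρ) :=
          mul_le_mul hclam habs (abs_nonneg t) hlam0.le
      _ = lam * L * ρ := by ring
      _ = ρ := by rw [hlamL, one_mul]
  have hc't : |c' * t| ≤ ρ := by
    rw [abs_mul, abs_of_nonneg hc'0]
    calc c' * |t| ≤ lam * (L * ρ) :=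
          mul_le_mul hc'lam habs (abs_nonneg t) hlam0.le
      _ = lam * L * ρ := by ring
      _ = ρ := by rw [hlamL, one_mul]
  constructor
  · have ht2 : ((c * t) ^ 2 / 2 : ℝ) + ((c' * t) ^ 2 / 2 : ℝ) = t ^ 2 / 2 := by
      linear_combination (t ^ 2 / 2) * hsum
    rw [Complex.exp_add, hfe _ hct, hf'e _ hc't, hchar t, mul_mul_mul_comm,
      ← Complex.exp_add, ← Complex.ofReal_add, ht2]
  · have hb1 := hfb _ hct
    have hb2 := hf'b _ hc't
    have habs1 : |c * t| ^ 3 = c ^ 3 * |t| ^ 3 := by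
      rw [abs_mul, abs_of_nonneg hc0, mul_pow]
    have habs2 : |c' * t| ^ 3 = c' ^ 3 * |t| ^ 3 := by
      rw [abs_mul, abs_of_nonneg hc'0, mul_pow]
    have hcu : c ^ 3 ≤ lam * c ^ 2 := by
      calc c ^ 3 = c * c ^ 2 := by ring
        _ ≤ lam * c ^ 2 := mul_le_mul_of_nonneg_right hclam (sq_nonneg c)
    have hc'u : c' ^ 3 ≤ lam * c' ^ 2 := by
      calc c' ^ 3 = c' * c' ^ 2 := by ring
        _ ≤ lam * c' ^ 2 := mul_le_mul_of_nonneg_right hc'lam (sq_nonneg c')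
    have hsum3 : c ^ 3 + c' ^ 3 ≤ lam := by
      calc c ^ 3 + c' ^ 3 ≤ lam * c ^ 2 + lam * c' ^ 2 := add_le_add hcu hc'u
        _ = lam * (c ^ 2 + c' ^ 2) := by ring
        _ = lam := by rw [hsum, mul_one]
    have hM : 0 ≤ max N N' := le_trans hN (le_max_left _ _)
    have hT : (0 : ℝ) ≤ |t| ^ 3 := by positivity
    calc ‖f (c * t) + f' (c' * t)‖ ≤ ‖f (c * t)‖ + ‖f' (c' * t)‖ := norm_add_le _ _
      _ ≤ N * |c * t| ^ 3 + N' * |c' * t| ^ 3 := add_le_add hb1 hb2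
      _ = N * c ^ 3 * |t| ^ 3 + N' * c' ^ 3 * |t| ^ 3 := by rw [habs1, habs2]; ring
      _ ≤ max N N' * c ^ 3 * |t| ^ 3 + max N N' * c' ^ 3 * |t| ^ 3 := by
          have h1 : 0 ≤ c ^ 3 := by positivity
          have h2 : 0 ≤ c' ^ 3 := by positivity
          gcongr <;> [exact le_max_left _ _; exact le_max_right _ _]
      _ = max N N' * (c ^ 3 + c' ^ 3) * |t| ^ 3 := by ring
      _ ≤ max N N' * lam * |t| ^ 3 := by
          gcongr
      _ = lam * max N N' * |t| ^ 3 := by ring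
end

section
/- Let X and Y be real random variables on the same probability space with E[X] = E[Y] = 0, Var(X) = Var(Y) = 1, E|X|³ ≤ C_X, E|Y|³ ≤ C_X, and E|Y − X|³ ≤ C_r for constants C_X, C_r < ∞. Then for every t ∈ ℝ one has |φ_X(t) − φ_Y(t)| ≤ C_r^{1/3}·C_X^{2/3}·|t|³. -/
open MeasureTheory ProbabilityTheory Filter Topology
open scoped ENNReal

universe u

noncomputable def gphi (u : ℝ) : ℂ :=
  Complex.exp (Complex.I * u) - 1 - Complex.I * u + (u : ℂ) ^ 2 / 2

lemma gphi_hasDerivAt (u : ℝ) :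
    HasDerivAt gphi (Complex.I * (Complex.exp (Complex.I * u) - 1 - Complex.I * u)) u := by
  have h0 : HasDerivAt (fun s : ℝ => (s : ℂ)) 1 u := by
    simpa using (hasDerivAt_id u).ofReal_comp
  have h1 : HasDerivAt (fun s : ℝ => Complex.I * (s : ℂ)) Complex.I u := by
    simpa using h0.const_mul Complex.I
  have h2 : HasDerivAt (fun s : ℝ => Complex.exp (Complex.I * s))
      (Complex.exp (Complex.I * u) * Complex.I) u := h1.cexp
  have h3 := (h0.mul h0).div_const 2
  have := ((h2.sub_const 1).sub h1).add h3
  have hfun : gphi = fun x : ℝ => Complex.exp (Complex.I * x) - 1 - Complex.I * x + (x:ℂ) * x / 2 := by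
    funext x; rw [gphi, pow_two]
  rw [hfun]
  refine this.congr_deriv ?_
  ring_nf
  rw [Complex.I_sq]
  ring

lemma norm_exp_I_sub_one_le (u : ℝ) : ‖Complex.exp (Complex.I * u) - 1‖ ≤ |u| := by
  have he : Complex.exp (Complex.I * u) - 1
      = ((Real.cos u - 1 : ℝ) : ℂ) + ((Real.sin u : ℝ) : ℂ) * Complex.I := by
    rw [mul_comm, Complex.exp_mul_I]
    push_cast
    ring
  rw [he, Complex.norm_add_mul_I]
  have h1 : (Real.cos u - 1) ^ 2 + Real.sin u ^ 2 ≤ u ^ 2 := by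
    nlinarith [Real.sin_sq_add_cos_sq u, Real.one_sub_sq_div_two_le_cos (x := u)]
  calc Real.sqrt ((Real.cos u - 1) ^ 2 + Real.sin u ^ 2) ≤ Real.sqrt (u ^ 2) :=
        Real.sqrt_le_sqrt h1
    _ = |u| := by rw [Real.sqrt_sq_eq_abs]

lemma norm_exp_I_sub_one_sub_le (u : ℝ) :
    ‖Complex.exp (Complex.I * u) - 1 - Complex.I * u‖ ≤ u ^ 2 / 2 := by
  have hder : ∀ s : ℝ, HasDerivAt (fun v : ℝ => Complex.exp (Complex.I * v) - 1 - Complex.I * v)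
      (Complex.I * (Complex.exp (Complex.I * s) - 1)) s := by
    intro s
    have h0 : HasDerivAt (fun v : ℝ => (v : ℂ)) 1 s := by
      simpa using (hasDerivAt_id s).ofReal_comp
    have h1 : HasDerivAt (fun v : ℝ => Complex.I * (v : ℂ)) Complex.I s := by
      simpa using h0.const_mul Complex.I
    have h2 := h1.cexp
    have := (h2.sub_const 1).sub h1
    refine this.congr_deriv ?_
    ring
  have hcont : Continuous fun s : ℝ => Complex.I * (Complex.exp (Complex.I * s) - 1) := by
    continuity
  have hftc : Complex.exp (Complex.I * u) - 1 - Complex.I * u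
      = ∫ s in (0:ℝ)..u, Complex.I * (Complex.exp (Complex.I * s) - 1) := by
    have := intervalIntegral.integral_eq_sub_of_hasDerivAt
      (f := fun v : ℝ => Complex.exp (Complex.I * v) - 1 - Complex.I * v)
      (fun s _ => hder s) (hcont.intervalIntegrable 0 u)
    simp only [Complex.ofReal_zero, mul_zero, Complex.exp_zero] at this
    rw [this]; ring
  rw [hftc]
  have hb : ‖∫ s in (0:ℝ)..u, Complex.I * (Complex.exp (Complex.I * s) - 1)‖
      ≤ |(∫ s in (0:ℝ)..u, |s|)| := by
    apply intervalIntegral.norm_integral_le_abs_of_norm_le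
    · filter_upwards [ae_restrict_mem measurableSet_uIoc] with s hs
      rw [norm_mul, Complex.norm_I, one_mul]
      exact norm_exp_I_sub_one_le s
    · exact (continuous_abs.intervalIntegrable 0 u)
  refine hb.trans ?_
  rcases le_total 0 u with h | h
  · have : (∫ s in (0:ℝ)..u, |s|) = ∫ s in (0:ℝ)..u, s := by
      apply intervalIntegral.integral_congr
      intro s hs
      rw [Set.uIcc_of_le h] at hs
      exact abs_of_nonneg hs.1
    rw [this, integral_id, abs_of_nonneg (by nlinarith [sq_nonneg u] : (0:ℝ) ≤ (u^2 - 0^2)/2)]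
    nlinarith
  · have : (∫ s in (0:ℝ)..u, |s|) = ∫ s in (0:ℝ)..u, -s := by
      apply intervalIntegral.integral_congr
      intro s hs
      rw [Set.uIcc_of_ge h] at hs
      exact abs_of_nonpos hs.2
    rw [this, intervalIntegral.integral_neg, integral_id, abs_neg,
      abs_of_nonneg (by nlinarith [sq_nonneg u] : (0:ℝ) ≤ (u^2 - 0^2)/2)]
    nlinarith

lemma gphi_diff_le (a b : ℝ) :
    ‖gphi a - gphi b‖ ≤ (a ^ 2 + b ^ 2) / 2 * |a - b| := by
  have key := Convex.norm_image_sub_le_of_norm_hasDerivWithin_le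
    (f := fun s : ℝ => gphi s)
    (f' := fun s : ℝ => Complex.I * (Complex.exp (Complex.I * s) - 1 - Complex.I * s))
    (s := Set.uIcc b a) (C := (a ^ 2 + b ^ 2) / 2)
    (fun x _ => (gphi_hasDerivAt x).hasDerivWithinAt)
    (fun x hx => by
      rw [norm_mul, Complex.norm_I, one_mul]
      refine (norm_exp_I_sub_one_sub_le x).trans ?_
      rw [Set.mem_uIcc] at hx
      rcases hx with ⟨h1, h2⟩ | ⟨h1, h2⟩ <;> nlinarith [mul_nonneg (sub_nonneg.2 h1) (sub_nonneg.2 h2), sq_nonneg (a+b), sq_nonneg (a-b)])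
    (convex_uIcc b a) Set.left_mem_uIcc Set.right_mem_uIcc
  simpa [Real.norm_eq_abs] using key

lemma memLp_three {Ω : Type u} [MeasureSpace Ω] (Z : Ω → ℝ)
    (hZm : AEStronglyMeasurable Z ℙ) (h3 : Integrable (fun ω => |Z ω| ^ 3) ℙ) :
    MemLp Z 3 ℙ := by
  rw [← memLp_norm_rpow_iff (q := 3) (p := 3) hZm (by norm_num) (by norm_num)]
  have h33 : (3 : ℝ≥0∞) / 3 = 1 := ENNReal.div_self (by norm_num) (by norm_num)
  rw [h33, memLp_one_iff_integrable]
  refine h3.congr ?_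
  filter_upwards with ω
  rw [Real.norm_eq_abs, show ((3:ℝ≥0∞)).toReal = ((3:ℕ):ℝ) by norm_num, Real.rpow_natCast]

lemma gphi_integral {Ω : Type u} [MeasureSpace Ω] [IsProbabilityMeasure (ℙ : Measure Ω)]
    (Z : Ω → ℝ) (hZm : Measurable Z) (hZ3 : Integrable (fun ω => |Z ω| ^ 3) ℙ)
    (hmZ : (∫ ω, Z ω) = 0) (hv : (∫ ω, Z ω ^ 2) = 1) (t : ℝ) :
    Integrable (fun ω => gphi (t * Z ω)) ℙ ∧
      (∫ ω, gphi (t * Z ω)) = charFun' Z t - 1 + ((t ^ 2 / 2 : ℝ) : ℂ) := by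
  have iZ : Integrable Z ℙ := by
    refine (hZ3.add (integrable_const 1)).mono' hZm.aestronglyMeasurable ?_
    filter_upwards with ω
    simp only [Pi.add_apply, Real.norm_eq_abs]
    rcases le_total (|Z ω|) 1 with h | h
    · have : (0:ℝ) ≤ |Z ω| ^ 3 := by positivity
      linarith
    · have h2 := pow_le_pow_right₀ h (show 1 ≤ 3 by norm_num)
      rw [pow_one] at h2
      linarith
  have iZ2 : Integrable (fun ω => Z ω ^ 2) ℙ := by
    refine (hZ3.add (integrable_const 1)).mono'
      ((hZm.pow measurable_const).aestronglyMeasurable) ?_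
    filter_upwards with ω
    simp only [Pi.add_apply, Real.norm_eq_abs]
    rw [abs_pow]
    rcases le_total (|Z ω|) 1 with h | h
    · have h0 : (0:ℝ) ≤ |Z ω| ^ 3 := by positivity
      have h1 : |Z ω| ^ 2 ≤ 1 := pow_le_one₀ (abs_nonneg _) h
      linarith
    · have h2 := pow_le_pow_right₀ h (show 2 ≤ 3 by norm_num)
      linarith
  have iexp : Integrable (fun ω => Complex.exp (Complex.I * ((t * Z ω : ℝ) : ℂ))) ℙ := by
    refine (integrable_const (1:ℝ)).mono' ?_ ?_
    · exact (Complex.measurable_exp.comp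
        ((Complex.measurable_ofReal.comp (hZm.const_mul t)).const_mul Complex.I)).aestronglyMeasurable
    · filter_upwards with ω
      rw [Complex.norm_exp]
      simp
  have hofReal : ∀ {f : Ω → ℝ}, Integrable f ℙ → Integrable (fun ω => ((f ω : ℝ) : ℂ)) ℙ := by
    intro f hf
    simpa using Complex.ofRealCLM.integrable_comp hf
  have ilin : Integrable (fun ω => Complex.I * ((t * Z ω : ℝ) : ℂ)) ℙ :=
    (hofReal (iZ.const_mul t)).const_mul Complex.I
  have isq : Integrable (fun ω => ((t * Z ω : ℝ) : ℂ) ^ 2 / 2) ℙ := by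
    have h := hofReal ((iZ2.const_mul (t ^ 2)).div_const 2)
    refine h.congr ?_
    filter_upwards with ω
    push_cast
    ring
  have i2 : Integrable (fun ω => Complex.exp (Complex.I * ((t * Z ω : ℝ) : ℂ)) - 1) ℙ := by
    exact iexp.sub (integrable_const 1)
  have i3 : Integrable (fun ω =>
      Complex.exp (Complex.I * ((t * Z ω : ℝ) : ℂ)) - 1 - Complex.I * ((t * Z ω : ℝ) : ℂ)) ℙ := by
    exact i2.sub ilin
  have i4 : Integrable (fun ω =>
      Complex.exp (Complex.I * ((t * Z ω : ℝ) : ℂ)) - 1 - Complex.I * ((t * Z ω : ℝ) : ℂ)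
        + ((t * Z ω : ℝ) : ℂ) ^ 2 / 2) ℙ := by
    exact i3.add isq
  constructor
  · refine i4.congr ?_
    filter_upwards with ω
    rw [gphi]
  · have e1 : (∫ ω, Complex.I * ((t * Z ω : ℝ) : ℂ)) = 0 := by
      rw [MeasureTheory.integral_const_mul]
      have hor : (∫ a, ((t * Z a : ℝ) : ℂ)) = ((∫ a, t * Z a : ℝ) : ℂ) :=
        integral_ofReal (𝕜 := ℂ)
      rw [hor, MeasureTheory.integral_const_mul, hmZ, mul_zero]
      simp
    have e2 : (∫ ω, ((t * Z ω : ℝ) : ℂ) ^ 2 / 2) = ((t ^ 2 / 2 : ℝ) : ℂ) := by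
      have hfe : (fun ω => ((t * Z ω : ℝ) : ℂ) ^ 2 / 2)
          = fun ω => (((t ^ 2 / 2) * Z ω ^ 2 : ℝ) : ℂ) := by
        funext ω; push_cast; ring
      have hor : (∫ a, (((t ^ 2 / 2) * Z a ^ 2 : ℝ) : ℂ)) = ((∫ a, (t ^ 2 / 2) * Z a ^ 2 : ℝ) : ℂ) :=
        integral_ofReal (𝕜 := ℂ)
      rw [hfe, hor, MeasureTheory.integral_const_mul, hv, mul_one]
    calc (∫ ω, gphi (t * Z ω))
        = ∫ ω, (Complex.exp (Complex.I * ((t * Z ω : ℝ) : ℂ)) - 1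
            - Complex.I * ((t * Z ω : ℝ) : ℂ) + ((t * Z ω : ℝ) : ℂ) ^ 2 / 2) :=
          integral_congr_ae (Eventually.of_forall fun ω => by simp only [gphi])
      _ = (∫ ω, (Complex.exp (Complex.I * ((t * Z ω : ℝ) : ℂ)) - 1
            - Complex.I * ((t * Z ω : ℝ) : ℂ))) + ∫ ω, ((t * Z ω : ℝ) : ℂ) ^ 2 / 2 :=
          integral_add i3 isq
      _ = (∫ ω, (Complex.exp (Complex.I * ((t * Z ω : ℝ) : ℂ)) - 1))
            - (∫ ω, Complex.I * ((t * Z ω : ℝ) : ℂ)) + ∫ ω, ((t * Z ω : ℝ) : ℂ) ^ 2 / 2 := by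
          rw [integral_sub i2 ilin]
      _ = (∫ ω, Complex.exp (Complex.I * ((t * Z ω : ℝ) : ℂ))) - 1
            - (∫ ω, Complex.I * ((t * Z ω : ℝ) : ℂ)) + ∫ ω, ((t * Z ω : ℝ) : ℂ) ^ 2 / 2 := by
          rw [integral_sub iexp (integrable_const 1), integral_const]
          simp
      _ = charFun' Z t - 1 + ((t ^ 2 / 2 : ℝ) : ℂ) := by
          rw [e1, e2, charFun']
          ring

/-- **Perturbation estimate for characteristic functions.** If `X, Y` are standardized with
third moments bounded by `C_X` and `E|Y − X|³ ≤ C_r`, then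
`|φ_X(t) − φ_Y(t)| ≤ C_r^{1/3}·C_X^{2/3}·|t|³`. -/
theorem charFun_perturbation {Ω : Type u} [MeasureSpace Ω]
    [IsProbabilityMeasure (ℙ : Measure Ω)]
    (X Y : Ω → ℝ) (hXm : Measurable X) (hYm : Measurable Y)
    (hX3 : Integrable (fun ω => |X ω| ^ 3) ℙ)
    (hY3 : Integrable (fun ω => |Y ω| ^ 3) ℙ)
    (hr3 : Integrable (fun ω => |Y ω - X ω| ^ 3) ℙ)
    (hmX : (∫ ω, X ω) = 0) (hmY : (∫ ω, Y ω) = 0)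
    (hvX : variance X ℙ = 1) (hvY : variance Y ℙ = 1)
    (CX Cr : ℝ)
    (h3X : (∫ ω, |X ω| ^ 3) ≤ CX) (h3Y : (∫ ω, |Y ω| ^ 3) ≤ CX)
    (h3r : (∫ ω, |Y ω - X ω| ^ 3) ≤ Cr) :
    ∀ t : ℝ, ‖charFun' X t - charFun' Y t‖
      ≤ Cr ^ ((1 : ℝ) / 3) * CX ^ ((2 : ℝ) / 3) * |t| ^ 3 := by
  intro t
  -- nonnegativity of the constants
  have hintD : (0:ℝ) ≤ ∫ ω, |Y ω - X ω| ^ 3 := integral_nonneg fun ω => by positivity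
  have hintX : (0:ℝ) ≤ ∫ ω, |X ω| ^ 3 := integral_nonneg fun ω => by positivity
  have hintY : (0:ℝ) ≤ ∫ ω, |Y ω| ^ 3 := integral_nonneg fun ω => by positivity
  have hCr0 : 0 ≤ Cr := hintD.trans h3r
  have hCX0 : 0 ≤ CX := hintX.trans h3X
  -- second moments
  have hsecond : ∀ (Z : Ω → ℝ), Measurable Z → Integrable (fun ω => |Z ω| ^ 3) ℙ →
      (∫ ω, Z ω) = 0 → variance Z ℙ = 1 → (∫ ω, Z ω ^ 2) = 1 := by
    intro Z hZm hZ3 hmZ hvZ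
    have hL3 : MemLp Z 3 ℙ := memLp_three Z hZm.aestronglyMeasurable hZ3
    have hL2 : MemLp Z 2 ℙ := hL3.mono_exponent (by norm_num)
    have h := variance_eq_sub (μ := ℙ) hL2
    simp only [Pi.pow_apply] at h
    rw [hvZ, hmZ] at h
    linarith
  have hX2 : (∫ ω, X ω ^ 2) = 1 := hsecond X hXm hX3 hmX hvX
  have hY2 : (∫ ω, Y ω ^ 2) = 1 := hsecond Y hYm hY3 hmY hvY
  obtain ⟨hIX, hEX⟩ := gphi_integral X hXm hX3 hmX hX2 t
  obtain ⟨hIY, hEY⟩ := gphi_integral Y hYm hY3 hmY hY2 t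
  -- difference of characteristic functions as a single integral
  have hdiff : charFun' X t - charFun' Y t = ∫ ω, (gphi (t * X ω) - gphi (t * Y ω)) := by
    rw [integral_sub hIX hIY, hEX, hEY]
    ring
  -- integrability of the dominating functions
  have prod_int : ∀ (Z : Ω → ℝ), Measurable Z → Integrable (fun ω => |Z ω| ^ 3) ℙ →
      Integrable (fun ω => |Y ω - X ω| * Z ω ^ 2) ℙ := by
    intro Z hZm hZ3
    refine ((hr3.add hZ3).add hZ3).mono'
      (((hYm.sub hXm).abs.mul (hZm.pow measurable_const)).aestronglyMeasurable) ?_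
    filter_upwards with ω
    simp only [Pi.add_apply, Real.norm_eq_abs]
    rw [abs_of_nonneg (by positivity : (0:ℝ) ≤ |Y ω - X ω| * Z ω ^ 2), ← sq_abs (Z ω)]
    nlinarith [mul_nonneg (sq_nonneg (|Y ω - X ω| - |Z ω|))
        (by positivity : (0:ℝ) ≤ |Y ω - X ω| + 2 * |Z ω|),
      abs_nonneg (Y ω - X ω), abs_nonneg (Z ω)]
  have iDX2 := prod_int X hXm hX3
  have iDY2 := prod_int Y hYm hY3
  -- Hölder's inequality
  have hpq : Real.HolderConjugate 3 (3/2) := ⟨by norm_num, by norm_num, by norm_num⟩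
  have hofr3 : ENNReal.ofReal (3:ℝ) = 3 := by norm_num [ENNReal.ofReal_ofNat]
  have hofr32 : ENNReal.ofReal ((3:ℝ)/2) = 3/2 := by
    rw [ENNReal.ofReal_div_of_pos (by norm_num)]
    norm_num [ENNReal.ofReal_ofNat]
  have hMD : MemLp (fun ω => |Y ω - X ω|) (ENNReal.ofReal 3) ℙ := by
    rw [hofr3]
    have h := (memLp_three (fun ω => Y ω - X ω) (hYm.sub hXm).aestronglyMeasurable hr3).norm
    refine (memLp_congr_ae ?_).2 h
    filter_upwards with ω
    rw [Real.norm_eq_abs]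
  have hMsq : ∀ (Z : Ω → ℝ), Measurable Z → Integrable (fun ω => |Z ω| ^ 3) ℙ →
      MemLp (fun ω => Z ω ^ 2) (ENNReal.ofReal (3/2)) ℙ := by
    intro Z hZm hZ3
    rw [hofr32]
    have h3 : MemLp Z 3 ℙ := memLp_three Z hZm.aestronglyMeasurable hZ3
    have h := (memLp_norm_rpow_iff (q := 2) (p := 3) hZm.aestronglyMeasurable
      (by norm_num) (by norm_num)).2 h3
    refine (memLp_congr_ae ?_).1 h
    filter_upwards with ω
    rw [Real.norm_eq_abs, show ((2:ℝ≥0∞)).toReal = ((2:ℕ):ℝ) by norm_num, Real.rpow_natCast,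
      sq_abs]
  have holder : ∀ (Z : Ω → ℝ), Measurable Z → Integrable (fun ω => |Z ω| ^ 3) ℙ →
      (∫ ω, |Z ω| ^ 3) ≤ CX →
      (∫ ω, |Y ω - X ω| * Z ω ^ 2) ≤ Cr ^ ((1:ℝ)/3) * CX ^ ((2:ℝ)/3) := by
    intro Z hZm hZ3 hZCX
    have hintZ : (0:ℝ) ≤ ∫ ω, |Z ω| ^ 3 := integral_nonneg fun ω => by positivity
    have H := integral_mul_le_Lp_mul_Lq_of_nonneg (μ := ℙ) hpq
      (f := fun ω => |Y ω - X ω|) (g := fun ω => Z ω ^ 2)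
      (Eventually.of_forall fun ω => abs_nonneg _)
      (Eventually.of_forall fun ω => sq_nonneg _)
      hMD (hMsq Z hZm hZ3)
    have e1 : ∀ x : ℝ, |x| ^ (3:ℝ) = |x| ^ 3 := fun x => by
      rw [← Real.rpow_natCast |x| 3]; norm_num
    have e2 : ∀ x : ℝ, (x ^ 2) ^ ((3:ℝ)/2) = |x| ^ 3 := fun x => by
      rw [← sq_abs, ← Real.rpow_natCast |x| 2, ← Real.rpow_mul (abs_nonneg x),
        ← Real.rpow_natCast |x| 3]
      norm_num
    simp only [e1, e2] at H
    have hq : (1:ℝ) / (3/2) = 2/3 := by norm_num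
    rw [hq] at H
    refine H.trans ?_
    have b1 : (∫ ω, |Y ω - X ω| ^ 3) ^ ((1:ℝ)/3) ≤ Cr ^ ((1:ℝ)/3) :=
      Real.rpow_le_rpow hintD h3r (by norm_num)
    have b2 : (∫ ω, |Z ω| ^ 3) ^ ((2:ℝ)/3) ≤ CX ^ ((2:ℝ)/3) :=
      Real.rpow_le_rpow hintZ hZCX (by norm_num)
    exact mul_le_mul b1 b2 (Real.rpow_nonneg hintZ _) (Real.rpow_nonneg hCr0 _)
  have holderX := holder X hXm hX3 h3X
  have holderY := holder Y hYm hY3 h3Y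
  -- pointwise bound and conclusion
  have hnorm : ‖charFun' X t - charFun' Y t‖
      ≤ ∫ ω, |t| ^ 3 / 2 * (|Y ω - X ω| * X ω ^ 2 + |Y ω - X ω| * Y ω ^ 2) := by
    rw [hdiff]
    refine (norm_integral_le_integral_norm _).trans ?_
    refine integral_mono_of_nonneg (Eventually.of_forall fun ω => norm_nonneg _)
      (((iDX2.add iDY2).const_mul (|t| ^ 3 / 2)).congr
        (Eventually.of_forall fun ω => by simp only [Pi.add_apply]; try ring)) ?_
    filter_upwards with ω
    refine (gphi_diff_le (t * X ω) (t * Y ω)).trans (le_of_eq ?_)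
    have h1 : |t * X ω - t * Y ω| = |t| * |Y ω - X ω| := by
      rw [show t * X ω - t * Y ω = t * (X ω - Y ω) by ring, abs_mul, abs_sub_comm]
    rw [h1, show |t| ^ 3 = t ^ 2 * |t| by rw [pow_succ, sq_abs]]
    ring
  refine hnorm.trans ?_
  have hsplit : (∫ ω, |t| ^ 3 / 2 * (|Y ω - X ω| * X ω ^ 2 + |Y ω - X ω| * Y ω ^ 2))
      = |t| ^ 3 / 2 * ((∫ ω, |Y ω - X ω| * X ω ^ 2) + ∫ ω, |Y ω - X ω| * Y ω ^ 2) := by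
    rw [MeasureTheory.integral_const_mul, integral_add iDX2 iDY2]
  rw [hsplit]
  have habs : (0:ℝ) ≤ |t| ^ 3 / 2 := by positivity
  calc |t| ^ 3 / 2 * ((∫ ω, |Y ω - X ω| * X ω ^ 2) + ∫ ω, |Y ω - X ω| * Y ω ^ 2)
      ≤ |t| ^ 3 / 2 * (Cr ^ ((1:ℝ)/3) * CX ^ ((2:ℝ)/3) + Cr ^ ((1:ℝ)/3) * CX ^ ((2:ℝ)/3)) :=
        mul_le_mul_of_nonneg_left (add_le_add holderX holderY) habs
    _ = Cr ^ ((1:ℝ)/3) * CX ^ ((2:ℝ)/3) * |t| ^ 3 := by ring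
end

section
/- Let X and Y be real random variables on the same probability space with E[X] = E[Y] = 0, Var(X) = Var(Y) = 1, E|X|³ ≤ C_X, E|Y|³ ≤ C_X, and E|Y − X|³ ≤ C_r, and set K_r = C_r^{1/3}·C_X^{2/3}. Suppose ρ > 0 and N ≥ 0 are such that for all 0 < |t| ≤ ρ one has φ_X(t) ≠ 0 and |Log(φ_X(t)·e^{t²/2})| ≤ N·|t|³, that ρ³·N ≤ 1/100, and that K_r·ρ³·e^{ρ²/2} ≤ 1/100. Then for all 0 < |t| ≤ ρ one has φ_Y(t) ≠ 0 and |Log(φ_Y(t)·e^{t²/2})| ≤ (N + 2·K_r·e^{ρ²/2})·|t|³. -/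
open MeasureTheory ProbabilityTheory Filter Topology

universe u

section AuxLemmas


lemma expI_hasDerivAt (c : ℂ) (u : ℝ) :
    HasDerivAt (fun v : ℝ => Complex.exp (c * v)) (c * Complex.exp (c * u)) u := by
  have h1 : HasDerivAt (fun v : ℝ => (v : ℂ)) 1 u := hasDerivAt_id (u:ℝ) |>.ofReal_comp
  have h2 : HasDerivAt (fun v : ℝ => c * (v:ℂ)) c u := by simpa using h1.const_mul c
  simpa [mul_comm] using (h2.cexp)

lemma norm_expI_sub_one (x : ℝ) : ‖Complex.exp (Complex.I * x) - 1‖ ≤ |x| := by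
  have h : ∀ u ∈ Set.uIcc (0:ℝ) x,
      HasDerivWithinAt (fun v : ℝ => Complex.exp (Complex.I * v))
        (Complex.I * Complex.exp (Complex.I * u)) (Set.uIcc (0:ℝ) x) u := fun u _ =>
    (expI_hasDerivAt Complex.I u).hasDerivWithinAt
  have hb : ∀ u ∈ Set.uIcc (0:ℝ) x, ‖Complex.I * Complex.exp (Complex.I * (u:ℝ))‖ ≤ 1 := by
    intro u _
    simp [Complex.norm_exp]
  have := Convex.norm_image_sub_le_of_norm_hasDerivWithin_le h hb (convex_uIcc _ _)
    Set.left_mem_uIcc Set.right_mem_uIcc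
  simpa using this

lemma norm_expI_sub_one_sub_nonneg {x : ℝ} (hx : 0 ≤ x) :
    ‖Complex.exp (Complex.I * x) - 1 - Complex.I * x‖ ≤ x ^ 2 / 2 := by
  set f : ℝ → ℂ := fun u => Complex.exp (Complex.I * u) - 1 - Complex.I * u with hf
  have hder : ∀ u : ℝ, HasDerivAt f (Complex.I * (Complex.exp (Complex.I * u) - 1)) u := by
    intro u
    have h1 := expI_hasDerivAt Complex.I u
    have h2 : HasDerivAt (fun v : ℝ => Complex.I * (v:ℂ)) Complex.I u := by
      simpa using ((hasDerivAt_id u).ofReal_comp.const_mul Complex.I)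
    have := (h1.sub_const 1).sub h2
    refine this.congr_deriv (Eq.symm ?_)
    ring
  have key := image_norm_le_of_norm_deriv_right_le_deriv_boundary
    (f := f) (a := 0) (b := x)
    (f' := fun u => Complex.I * (Complex.exp (Complex.I * u) - 1))
    (fun u _ => (hder u).continuousAt.continuousWithinAt)
    (fun u _ => (hder u).hasDerivWithinAt)
    (B := fun u => u ^ 2 / 2) (B' := fun u => u)
    (by simp [hf]) (fun u => by simpa using ((hasDerivAt_pow 2 u).div_const 2))
    (fun u hu => by
      have := norm_expI_sub_one u
      calc ‖Complex.I * (Complex.exp (Complex.I * u) - 1)‖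
          = ‖Complex.exp (Complex.I * u) - 1‖ := by simp
        _ ≤ |u| := this
        _ = u := abs_of_nonneg hu.1)
  simpa [hf] using key (Set.right_mem_Icc.mpr hx)

lemma norm_expI_sub_one_sub (x : ℝ) :
    ‖Complex.exp (Complex.I * x) - 1 - Complex.I * x‖ ≤ x ^ 2 / 2 := by
  rcases le_or_gt 0 x with hx | hx
  · exact norm_expI_sub_one_sub_nonneg hx
  · have h := norm_expI_sub_one_sub_nonneg (neg_nonneg.mpr hx.le)
    have hc : Complex.exp (Complex.I * (-x:ℝ)) - 1 - Complex.I * (-x:ℝ)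
        = (starRingEnd ℂ) (Complex.exp (Complex.I * x) - 1 - Complex.I * x) := by
      simp [← Complex.exp_conj, map_mul, Complex.conj_I, Complex.conj_ofReal]
    rw [hc, RCLike.norm_conj] at h
    simpa [neg_pow] using h

noncomputable def gfun (t u : ℝ) : ℂ :=
  Complex.exp (Complex.I * ((t * u : ℝ) : ℂ)) - 1 - Complex.I * ((t * u : ℝ) : ℂ)
    + (((t * u) ^ 2 / 2 : ℝ) : ℂ)

lemma gfun_hasDerivAt (t u : ℝ) :
    HasDerivAt (gfun t)
      ((Complex.I * t) * (Complex.exp (Complex.I * ((t*u:ℝ):ℂ)) - 1 - Complex.I * ((t*u:ℝ):ℂ))) u := by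
  have hlin : HasDerivAt (fun v : ℝ => ((t * v : ℝ) : ℂ)) (t : ℂ) u := by
    have : HasDerivAt (fun v : ℝ => t * v) t u := by
      simpa using (hasDerivAt_id u).const_mul t
    simpa using this.ofReal_comp
  have h1 : HasDerivAt (fun v : ℝ => Complex.exp (Complex.I * ((t*v:ℝ):ℂ)))
      (Complex.I * t * Complex.exp (Complex.I * ((t*u:ℝ):ℂ))) u := by
    have := (hlin.const_mul Complex.I).cexp
    convert this using 1
    ring
  have h2 : HasDerivAt (fun v : ℝ => Complex.I * ((t*v:ℝ):ℂ)) (Complex.I * t) u :=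
    hlin.const_mul Complex.I
  have h3 : HasDerivAt (fun v : ℝ => (((t*v)^2/2 : ℝ) : ℂ)) ((t:ℂ)^2 * u) u := by
    have : HasDerivAt (fun v : ℝ => (t*v)^2/2) (t^2*u) u := by
      have h := (((hasDerivAt_id u).const_mul t).pow 2).div_const 2
      refine h.congr_deriv (Eq.symm ?_)
      simp only [id]
      ring
    simpa using this.ofReal_comp
  have := ((h1.sub_const 1).sub h2).add h3
  refine this.congr_deriv (Eq.symm ?_)
  push_cast
  linear_combination (-(t:ℂ)^2 * (u:ℂ)) * Complex.I_sq

lemma gfun_sub_le (t a b : ℝ) :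
    ‖gfun t b - gfun t a‖ ≤ |t| ^ 3 / 2 * (a ^ 2 + b ^ 2) * |b - a| := by
  have hder : ∀ u ∈ Set.uIcc a b, HasDerivWithinAt (gfun t)
      ((Complex.I * t) * (Complex.exp (Complex.I * ((t*u:ℝ):ℂ)) - 1 - Complex.I * ((t*u:ℝ):ℂ)))
      (Set.uIcc a b) u := fun u _ => (gfun_hasDerivAt t u).hasDerivWithinAt
  have hbound : ∀ u ∈ Set.uIcc a b,
      ‖(Complex.I * t) * (Complex.exp (Complex.I * ((t*u:ℝ):ℂ)) - 1 - Complex.I * ((t*u:ℝ):ℂ))‖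
        ≤ |t| ^ 3 / 2 * (a ^ 2 + b ^ 2) := by
    intro u hu
    have h1 : ‖Complex.exp (Complex.I * ((t*u:ℝ):ℂ)) - 1 - Complex.I * ((t*u:ℝ):ℂ)‖
        ≤ (t*u)^2/2 := norm_expI_sub_one_sub (t*u)
    have hu2 : u^2 ≤ a^2 + b^2 := by
      have hm : |u| ≤ max |a| |b| := by
        rcases Set.mem_uIcc.mp hu with ⟨h₁, h₂⟩ | ⟨h₁, h₂⟩
        · exact abs_le_max_abs_abs h₁ h₂
        · rw [max_comm]; exact abs_le_max_abs_abs h₁ h₂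
      have h4 : u^2 ≤ (max |a| |b|)^2 := by
        have := pow_le_pow_left₀ (abs_nonneg u) hm 2
        simpa [_root_.sq_abs] using this
      rcases max_cases |a| |b| with ⟨hh, _⟩ | ⟨hh, _⟩ <;>
        rw [hh, _root_.sq_abs] at h4 <;> nlinarith [sq_nonneg a, sq_nonneg b]
    calc ‖(Complex.I * t) * (Complex.exp (Complex.I * ((t*u:ℝ):ℂ)) - 1 - Complex.I * ((t*u:ℝ):ℂ))‖
        = |t| * ‖Complex.exp (Complex.I * ((t*u:ℝ):ℂ)) - 1 - Complex.I * ((t*u:ℝ):ℂ)‖ := by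
          simp [norm_mul]
      _ ≤ |t| * ((t*u)^2/2) := by
          exact mul_le_mul_of_nonneg_left h1 (abs_nonneg t)
      _ ≤ |t| ^ 3 / 2 * (a ^ 2 + b ^ 2) := by
          have h3 : |t| * ((t*u)^2/2) = |t|^3/2 * u^2 := by
            rw [mul_pow]
            rw [show t^2 = |t|^2 from (_root_.sq_abs t).symm]
            ring
          rw [h3]
          have : (0:ℝ) ≤ |t|^3/2 := by positivity
          nlinarith
  have key := Convex.norm_image_sub_le_of_norm_hasDerivWithin_le hder hbound
    (convex_uIcc a b) Set.left_mem_uIcc Set.right_mem_uIcc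
  calc ‖gfun t b - gfun t a‖ ≤ |t| ^ 3 / 2 * (a ^ 2 + b ^ 2) * ‖b - a‖ := key
    _ = |t| ^ 3 / 2 * (a ^ 2 + b ^ 2) * |b - a| := by rw [Real.norm_eq_abs]

lemma young3 {p q : ℝ} (hp : 0 ≤ p) (hq : 0 ≤ q) : p * q^2 ≤ p^3/3 + 2*q^3/3 := by
  nlinarith [sq_nonneg (p - q), mul_nonneg hp hq, mul_nonneg (mul_nonneg hp hq) hq,
    sq_nonneg (p + q), mul_nonneg hp hp, mul_nonneg hq hq]

lemma young3k {u w k : ℝ} (hu : 0 ≤ u) (hw : 0 ≤ w) (hk : 0 < k) :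
    u * w^2 ≤ k^6 * u^3/3 + 2/3 * w^3 / k^3 := by
  have h := young3 (p := k^2 * u) (q := w / k) (by positivity) (by positivity)
  have h2 : (k^2*u) * (w/k)^2 = u * w^2 := by field_simp
  rw [h2] at h
  calc u * w^2 ≤ (k^2*u)^3/3 + 2*(w/k)^3/3 := h
    _ = k^6 * u^3/3 + 2/3 * w^3 / k^3 := by field_simp

open MeasureTheory ProbabilityTheory in
lemma int_holder3 {Ω : Type*} [MeasureSpace Ω] [IsProbabilityMeasure (ℙ : Measure Ω)]
    (U W : Ω → ℝ) (hU : ∀ ω, 0 ≤ U ω) (hW : ∀ ω, 0 ≤ W ω)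
    (hU3 : Integrable (fun ω => U ω ^ 3) (ℙ : Measure Ω))
    (hW3 : Integrable (fun ω => W ω ^ 3) (ℙ : Measure Ω))
    {A B : ℝ} (hA : (∫ ω, U ω ^ 3) ≤ A) (hB : (∫ ω, W ω ^ 3) ≤ B)
    (hApos : 0 < A) (hBpos : 0 < B) :
    (∫ ω, U ω * W ω ^ 2) ≤ A ^ ((1:ℝ)/3) * B ^ ((2:ℝ)/3) := by
  set a := A ^ ((1:ℝ)/3) with ha_def
  set b := B ^ ((1:ℝ)/3) with hb_def
  have hapos : 0 < a := Real.rpow_pos_of_pos hApos _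
  have hbpos : 0 < b := Real.rpow_pos_of_pos hBpos _
  have haA : a ^ 3 = A := by
    rw [ha_def, ← Real.rpow_natCast (A ^ ((1:ℝ)/3)) 3, ← Real.rpow_mul hApos.le]
    norm_num
  have hbB : b ^ 3 = B := by
    rw [hb_def, ← Real.rpow_natCast (B ^ ((1:ℝ)/3)) 3, ← Real.rpow_mul hBpos.le]
    norm_num
  have hb2 : b ^ 2 = B ^ ((2:ℝ)/3) := by
    rw [hb_def, ← Real.rpow_natCast (B ^ ((1:ℝ)/3)) 2, ← Real.rpow_mul hBpos.le]
    norm_num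
  set k := (b/a) ^ ((1:ℝ)/3) with hk_def
  have hkpos : 0 < k := Real.rpow_pos_of_pos (by positivity) _
  have hk3 : k ^ 3 = b / a := by
    rw [hk_def, ← Real.rpow_natCast ((b/a) ^ ((1:ℝ)/3)) 3, ← Real.rpow_mul (by positivity)]
    norm_num
  have hk6 : k ^ 6 = (b/a)^2 := by
    rw [show (6:ℕ) = 3*2 by norm_num, pow_mul, hk3]
  have hmono : (∫ ω, U ω * W ω ^ 2)
      ≤ ∫ ω, (k^6/3 * U ω ^ 3 + (2/(3*k^3)) * W ω ^ 3) := by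
    apply integral_mono_of_nonneg
    · exact Filter.Eventually.of_forall fun ω => mul_nonneg (hU ω) (sq_nonneg _)
    · exact (hU3.const_mul _).add (hW3.const_mul _)
    · apply Filter.Eventually.of_forall
      intro ω
      have := young3k (hU ω) (hW ω) hkpos
      calc U ω * W ω ^ 2 ≤ k^6 * U ω^3/3 + 2/3 * W ω^3 / k^3 := this
        _ = k^6/3 * U ω ^ 3 + (2/(3*k^3)) * W ω ^ 3 := by field_simp
  have hsplit : (∫ ω, (k^6/3 * U ω ^ 3 + (2/(3*k^3)) * W ω ^ 3))
      = k^6/3 * (∫ ω, U ω ^ 3) + (2/(3*k^3)) * (∫ ω, W ω ^ 3) := by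
    rw [integral_add (hU3.const_mul _) (hW3.const_mul _), integral_const_mul, integral_const_mul]
  have hle : k^6/3 * (∫ ω, U ω ^ 3) + (2/(3*k^3)) * (∫ ω, W ω ^ 3)
      ≤ k^6/3 * A + (2/(3*k^3)) * B := by
    have c1 : (0:ℝ) ≤ k^6/3 := by positivity
    have c2 : (0:ℝ) ≤ 2/(3*k^3) := by positivity
    nlinarith
  have hval : k^6/3 * A + (2/(3*k^3)) * B = a * b^2 := by
    rw [← haA, ← hbB, hk6, hk3]
    field_simp
    ring
  calc (∫ ω, U ω * W ω ^ 2) ≤ _ := hmono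
    _ = _ := hsplit
    _ ≤ k^6/3 * A + (2/(3*k^3)) * B := hle
    _ = a * b^2 := hval
    _ = A ^ ((1:ℝ)/3) * B ^ ((2:ℝ)/3) := by rw [hb2]


end AuxLemmas

set_option maxHeartbeats 2000000 in
/-- **Stability of the logarithmic non-Gaussianity bound under a small perturbation.** -/
theorem log_charFun_perturbation {Ω : Type u} [MeasureSpace Ω]
    [IsProbabilityMeasure (ℙ : Measure Ω)]
    (X Y : Ω → ℝ) (hXm : Measurable X) (hYm : Measurable Y)
    (hX3 : Integrable (fun ω => |X ω| ^ 3) ℙ)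
    (hY3 : Integrable (fun ω => |Y ω| ^ 3) ℙ)
    (hr3 : Integrable (fun ω => |Y ω - X ω| ^ 3) ℙ)
    (hmX : (∫ ω, X ω) = 0) (hmY : (∫ ω, Y ω) = 0)
    (hvX : variance X ℙ = 1) (hvY : variance Y ℙ = 1)
    (CX Cr : ℝ)
    (h3X : (∫ ω, |X ω| ^ 3) ≤ CX) (h3Y : (∫ ω, |Y ω| ^ 3) ≤ CX)
    (h3r : (∫ ω, |Y ω - X ω| ^ 3) ≤ Cr)
    (Kr : ℝ) (hKr : Kr = Cr ^ ((1 : ℝ) / 3) * CX ^ ((2 : ℝ) / 3))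
    (ρ N : ℝ) (hρ : 0 < ρ) (hN : 0 ≤ N)
    (hXlog : ∀ t : ℝ, 0 < |t| → |t| ≤ ρ →
      charFun' X t ≠ 0 ∧
      ‖Complex.log (charFun' X t * Complex.exp ((t ^ 2 / 2 : ℝ) : ℂ))‖ ≤ N * |t| ^ 3)
    (hsmall₁ : ρ ^ 3 * N ≤ 1 / 100)
    (hsmall₂ : Kr * ρ ^ 3 * Real.exp (ρ ^ 2 / 2) ≤ 1 / 100) :
    ∀ t : ℝ, 0 < |t| → |t| ≤ ρ →
      charFun' Y t ≠ 0 ∧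
      ‖Complex.log (charFun' Y t * Complex.exp ((t ^ 2 / 2 : ℝ) : ℂ))‖
        ≤ (N + 2 * Kr * Real.exp (ρ ^ 2 / 2)) * |t| ^ 3 := by
  -- basic positivity facts
  have hCr0 : 0 ≤ Cr := le_trans (integral_nonneg fun ω => by positivity) h3r
  have hCX0 : 0 ≤ CX := le_trans (integral_nonneg fun ω => by positivity) h3X
  have hKr_nonneg : 0 ≤ Kr := by
    rw [hKr]; exact mul_nonneg (Real.rpow_nonneg hCr0 _) (Real.rpow_nonneg hCX0 _)
  -- integrability of low moments
  have cube_dom : ∀ x : ℝ, |x| ≤ 1 + |x| ^ 3 ∧ x ^ 2 ≤ 1 + |x| ^ 3 := by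
    intro x
    have h0 : 0 ≤ |x| := abs_nonneg x
    constructor
    · rcases le_total (|x|) 1 with h | h
      · nlinarith [pow_nonneg h0 3]
      · nlinarith [pow_nonneg h0 3, sq_nonneg (|x| - 1)]
    · have : x ^ 2 = |x| ^ 2 := (sq_abs x).symm
      rcases le_total (|x|) 1 with h | h
      · nlinarith
      · nlinarith [sq_nonneg (|x| - 1)]
  have hXint : Integrable X ℙ := by
    refine Integrable.mono' ((integrable_const 1).add hX3) hXm.aestronglyMeasurable ?_
    exact Eventually.of_forall fun ω => by simpa using (cube_dom (X ω)).1
  have hYint : Integrable Y ℙ := by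
    refine Integrable.mono' ((integrable_const 1).add hY3) hYm.aestronglyMeasurable ?_
    exact Eventually.of_forall fun ω => by simpa using (cube_dom (Y ω)).1
  have hX2int : Integrable (fun ω => X ω ^ 2) ℙ := by
    refine Integrable.mono' ((integrable_const 1).add hX3)
      ((hXm.pow_const 2).aestronglyMeasurable) ?_
    refine Eventually.of_forall fun ω => ?_
    have := (cube_dom (X ω)).2
    simpa [abs_of_nonneg (sq_nonneg (X ω))] using this
  have hY2int : Integrable (fun ω => Y ω ^ 2) ℙ := by
    refine Integrable.mono' ((integrable_const 1).add hY3)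
      ((hYm.pow_const 2).aestronglyMeasurable) ?_
    refine Eventually.of_forall fun ω => ?_
    have := (cube_dom (Y ω)).2
    simpa [abs_of_nonneg (sq_nonneg (Y ω))] using this
  have hDint : Integrable (fun ω => Y ω - X ω) ℙ := hYint.sub hXint
  -- second moments equal one
  have hintX2 : (∫ ω, X ω ^ 2) = 1 := by
    have hm : MemLp X 2 ℙ := (memLp_two_iff_integrable_sq hXm.aestronglyMeasurable).mpr hX2int
    have := variance_eq_sub hm
    rw [hvX, hmX] at this
    simp only [Pi.pow_apply] at this
    linarith
  have hintY2 : (∫ ω, Y ω ^ 2) = 1 := by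
    have hm : MemLp Y 2 ℙ := (memLp_two_iff_integrable_sq hYm.aestronglyMeasurable).mpr hY2int
    have := variance_eq_sub hm
    rw [hvY, hmY] at this
    simp only [Pi.pow_apply] at this
    linarith
  -- integrability of the complex exponentials
  have hexp : ∀ (Z : Ω → ℝ), Measurable Z → ∀ t : ℝ,
      Integrable (fun ω => Complex.exp (Complex.I * ((t * Z ω : ℝ) : ℂ))) ℙ := by
    intro Z hZ t
    refine Integrable.mono' (integrable_const 1)
      ((((Complex.measurable_ofReal.comp (hZ.const_mul t)).const_mul Complex.I).cexp).aestronglyMeasurable) ?_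
    refine Eventually.of_forall fun ω => ?_
    simp [Complex.norm_exp]
  -- the key difference bound
  have hdiff : ∀ t : ℝ, ‖charFun' Y t - charFun' X t‖ ≤ Kr * |t| ^ 3 := by
    intro t
    rcases hCr0.eq_or_lt with hCr | hCr
    · -- Cr = 0 : then Y = X a.e.
      have hD3 : (∫ ω, |Y ω - X ω| ^ 3) = 0 :=
        le_antisymm (hCr ▸ h3r)
          (integral_nonneg fun ω => by positivity)
      have hD0 := (integral_eq_zero_iff_of_nonneg (fun ω => by positivity) hr3).mp hD3
      have hYX : ∀ᵐ ω ∂(ℙ : Measure Ω), Y ω = X ω := by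
        filter_upwards [hD0] with ω h
        have h' : |Y ω - X ω| ^ 3 = 0 := h
        have : Y ω - X ω = 0 := by
          have := pow_eq_zero_iff (n := 3) (by norm_num) |>.mp h'
          exact abs_eq_zero.mp this
        linarith
      have hch : charFun' Y t = charFun' X t := by
        apply integral_congr_ae
        filter_upwards [hYX] with ω h
        rw [h]
      rw [hch, sub_self, norm_zero]
      positivity
    · -- 0 < Cr
      have hCX : 0 < CX := by
        rcases hCX0.eq_or_lt with h | h
        · exfalso
          have hX30 : (∫ ω, |X ω| ^ 3) = 0 :=
            le_antisymm (h3X.trans h.ge) (integral_nonneg fun ω => by positivity)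
          have hX0 := (integral_eq_zero_iff_of_nonneg (fun ω => by positivity) hX3).mp hX30
          have : (∫ ω, X ω ^ 2) = 0 := by
            rw [show (fun ω => X ω ^ 2) = fun ω => X ω ^ 2 from rfl]
            have : (fun ω => X ω ^ 2) =ᵐ[(ℙ : Measure Ω)] 0 := by
              filter_upwards [hX0] with ω hω
              have h' : |X ω| ^ 3 = 0 := hω
              have : X ω = 0 := by
                have := pow_eq_zero_iff (n := 3) (by norm_num) |>.mp h'
                exact abs_eq_zero.mp this
              simp [this]
            rw [integral_congr_ae this]; simp
          rw [hintX2] at this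
          norm_num at this
        · exact h
      -- Hölder bounds
      have hd1 : (∫ ω, |Y ω - X ω| * X ω ^ 2) ≤ Kr := by
        rw [hKr]
        have h := int_holder3 (fun ω => |Y ω - X ω|) (fun ω => |X ω|)
          (fun ω => abs_nonneg _) (fun ω => abs_nonneg _) hr3 hX3 h3r h3X hCr hCX
        simpa [_root_.sq_abs] using h
      have hd2 : (∫ ω, |Y ω - X ω| * Y ω ^ 2) ≤ Kr := by
        rw [hKr]
        have h := int_holder3 (fun ω => |Y ω - X ω|) (fun ω => |Y ω|)
          (fun ω => abs_nonneg _) (fun ω => abs_nonneg _) hr3 hY3 h3r h3Y hCr hCX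
        simpa [_root_.sq_abs] using h
      -- integrability of the dominating functions
      have hintDX2 : Integrable (fun ω => |Y ω - X ω| * X ω ^ 2) ℙ := by
        refine Integrable.mono' ((hr3.const_mul (1/3)).add (hX3.const_mul (2/3)))
          (((hYm.sub hXm).abs.mul (hXm.pow_const 2)).aestronglyMeasurable) ?_
        refine Filter.Eventually.of_forall fun ω => ?_
        have h := young3k (abs_nonneg (Y ω - X ω)) (abs_nonneg (X ω)) one_pos
        have h2 : |Y ω - X ω| * |X ω| ^ 2 = |Y ω - X ω| * X ω ^ 2 := by rw [_root_.sq_abs]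
        rw [h2] at h
        have h3 : ‖|Y ω - X ω| * X ω ^ 2‖ = |Y ω - X ω| * X ω ^ 2 := by
          rw [Real.norm_eq_abs, _root_.abs_of_nonneg (mul_nonneg (abs_nonneg _) (sq_nonneg _))]
        rw [h3]
        calc |Y ω - X ω| * X ω ^ 2 ≤ 1^6 * |Y ω - X ω|^3/3 + 2/3 * |X ω|^3 / 1^3 := h
          _ = 1/3 * |Y ω - X ω|^3 + 2/3 * |X ω|^3 := by ring
      have hintDY2 : Integrable (fun ω => |Y ω - X ω| * Y ω ^ 2) ℙ := by
        refine Integrable.mono' ((hr3.const_mul (1/3)).add (hY3.const_mul (2/3)))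
          (((hYm.sub hXm).abs.mul (hYm.pow_const 2)).aestronglyMeasurable) ?_
        refine Filter.Eventually.of_forall fun ω => ?_
        have h := young3k (abs_nonneg (Y ω - X ω)) (abs_nonneg (Y ω)) one_pos
        have h2 : |Y ω - X ω| * |Y ω| ^ 2 = |Y ω - X ω| * Y ω ^ 2 := by rw [_root_.sq_abs]
        rw [h2] at h
        have h3 : ‖|Y ω - X ω| * Y ω ^ 2‖ = |Y ω - X ω| * Y ω ^ 2 := by
          rw [Real.norm_eq_abs, _root_.abs_of_nonneg (mul_nonneg (abs_nonneg _) (sq_nonneg _))]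
        rw [h3]
        calc |Y ω - X ω| * Y ω ^ 2 ≤ 1^6 * |Y ω - X ω|^3/3 + 2/3 * |Y ω|^3 / 1^3 := h
          _ = 1/3 * |Y ω - X ω|^3 + 2/3 * |Y ω|^3 := by ring
      have hfe : (fun ω => |t|^3/2 * ((X ω^2 + Y ω^2) * |Y ω - X ω|))
          = fun ω => |t|^3/2 * (|Y ω - X ω| * X ω^2 + |Y ω - X ω| * Y ω^2) :=
        funext fun ω => by ring
      have hbint : Integrable (fun ω => |t|^3/2 * ((X ω^2 + Y ω^2) * |Y ω - X ω|)) ℙ := by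
        rw [hfe]
        exact (hintDX2.add hintDY2).const_mul _
      -- the integral identity
      have hGeq : ∀ ω, gfun t (Y ω) - gfun t (X ω)
          = (Complex.exp (Complex.I * ((t * Y ω : ℝ):ℂ)) - Complex.exp (Complex.I * ((t * X ω : ℝ):ℂ)))
            - Complex.I * ((t * (Y ω - X ω) : ℝ) : ℂ)
            + (((t^2/2 * (Y ω^2 - X ω^2)) : ℝ) : ℂ) := by
        intro ω
        simp only [gfun]
        push_cast
        ring
      have hGint : Integrable (fun ω => gfun t (Y ω) - gfun t (X ω)) ℙ := by
        have := (((hexp Y hYm t).sub (hexp X hXm t)).sub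
          (((hDint.const_mul t).ofReal (𝕜 := ℂ)).const_mul Complex.I)).add
          (((hY2int.sub hX2int).const_mul (t^2/2)).ofReal (𝕜 := ℂ))
        refine this.congr ?_
        exact Filter.Eventually.of_forall fun ω => (hGeq ω).symm
      have hIdent : charFun' Y t - charFun' X t = ∫ ω, (gfun t (Y ω) - gfun t (X ω)) := by
        rw [charFun', charFun', ← integral_sub (hexp Y hYm t) (hexp X hXm t)]
        have heq2 : ∀ ω, Complex.exp (Complex.I * ((t * Y ω : ℝ):ℂ)) - Complex.exp (Complex.I * ((t * X ω : ℝ):ℂ))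
            = (gfun t (Y ω) - gfun t (X ω))
              + Complex.I * ((t * (Y ω - X ω) : ℝ) : ℂ)
              - (((t^2/2 * (Y ω^2 - X ω^2)) : ℝ) : ℂ) := by
          intro ω
          rw [hGeq ω]
          ring
        rw [integral_congr_ae (Filter.Eventually.of_forall heq2)]
        rw [integral_sub, integral_add]
        · have hlin : (∫ ω, Complex.I * ((t * (Y ω - X ω) : ℝ) : ℂ)) = 0 := by
            rw [integral_const_mul]
            have : (∫ ω, ((t * (Y ω - X ω) : ℝ) : ℂ)) = (((∫ ω, t * (Y ω - X ω)) : ℝ) : ℂ) :=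
              integral_ofReal
            rw [this, integral_const_mul, integral_sub hYint hXint, hmY, hmX]
            simp
          have hquad : (∫ ω, (((t^2/2 * (Y ω^2 - X ω^2)) : ℝ) : ℂ)) = 0 := by
            have : (∫ ω, (((t^2/2 * (Y ω^2 - X ω^2)) : ℝ) : ℂ))
                = (((∫ ω, t^2/2 * (Y ω^2 - X ω^2)) : ℝ) : ℂ) := integral_ofReal
            rw [this, integral_const_mul, integral_sub hY2int hX2int, hintX2, hintY2]
            simp
          rw [hlin, hquad]
          ring
        · exact hGint
        · exact ((hDint.const_mul t).ofReal (𝕜 := ℂ)).const_mul Complex.I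
        · exact hGint.add (((hDint.const_mul t).ofReal (𝕜 := ℂ)).const_mul Complex.I)
        · exact ((hY2int.sub hX2int).const_mul (t^2/2)).ofReal (𝕜 := ℂ)
      -- the norm bound
      have hnorm : ‖∫ ω, (gfun t (Y ω) - gfun t (X ω))‖
          ≤ ∫ ω, |t|^3/2 * ((X ω^2 + Y ω^2) * |Y ω - X ω|) := by
        refine norm_integral_le_of_norm_le hbint ?_
        refine Filter.Eventually.of_forall fun ω => ?_
        have := gfun_sub_le t (X ω) (Y ω)
        calc ‖gfun t (Y ω) - gfun t (X ω)‖
            ≤ |t|^3/2 * (X ω^2 + Y ω^2) * |Y ω - X ω| := this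
          _ = |t|^3/2 * ((X ω^2 + Y ω^2) * |Y ω - X ω|) := by ring
      have hcalc : (∫ ω, |t|^3/2 * ((X ω^2 + Y ω^2) * |Y ω - X ω|))
          = |t|^3/2 * ((∫ ω, |Y ω - X ω| * X ω^2) + (∫ ω, |Y ω - X ω| * Y ω^2)) := by
        rw [hfe, integral_const_mul, integral_add hintDX2 hintDY2]
      rw [hIdent]
      refine le_trans hnorm ?_
      rw [hcalc]
      have ht3 : (0:ℝ) ≤ |t|^3/2 := by positivity
      nlinarith [integral_nonneg (μ := (ℙ : Measure Ω)) (f := fun ω => |Y ω - X ω| * X ω ^ 2)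
        (fun ω => mul_nonneg (abs_nonneg (Y ω - X ω)) (sq_nonneg (X ω)))]
  -- final argument
  intro t ht hρt
  obtain ⟨hφX, hlogX⟩ := hXlog t ht hρt
  have htρ3 : |t| ^ 3 ≤ ρ ^ 3 := pow_le_pow_left₀ (abs_nonneg t) hρt 3
  have hexpt : Real.exp (t ^ 2 / 2) ≤ Real.exp (ρ ^ 2 / 2) := by
    have : t ^ 2 ≤ ρ ^ 2 := by
      rw [← sq_abs t]; exact pow_le_pow_left₀ (abs_nonneg t) hρt 2
    exact Real.exp_le_exp.mpr (by linarith)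
  set zX := charFun' X t * Complex.exp ((t ^ 2 / 2 : ℝ) : ℂ) with hzX_def
  set zY := charFun' Y t * Complex.exp ((t ^ 2 / 2 : ℝ) : ℂ) with hzY_def
  have hzX_ne : zX ≠ 0 := mul_ne_zero hφX (Complex.exp_ne_zero _)
  have hlogX_small : ‖Complex.log zX‖ ≤ 1 / 100 := by
    refine le_trans hlogX ?_
    calc N * |t| ^ 3 ≤ N * ρ ^ 3 := by
          exact mul_le_mul_of_nonneg_left htρ3 hN
      _ = ρ ^ 3 * N := by ring
      _ ≤ 1 / 100 := hsmall₁
  have hzX_one : ‖zX - 1‖ ≤ 2 / 100 := by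
    have h1 : ‖Complex.log zX‖ ≤ 1 := le_trans hlogX_small (by norm_num)
    have := Complex.norm_exp_sub_one_le h1
    rw [Complex.exp_log hzX_ne] at this
    calc ‖zX - 1‖ ≤ 2 * ‖Complex.log zX‖ := this
      _ ≤ 2 / 100 := by
          have : ‖Complex.log zX‖ ≤ 1/100 := hlogX_small
          linarith
  have hzYX : ‖zY - zX‖ ≤ Kr * Real.exp (ρ ^ 2 / 2) * |t| ^ 3 := by
    have h1 : zY - zX = (charFun' Y t - charFun' X t) * Complex.exp ((t ^ 2 / 2 : ℝ) : ℂ) := by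
      rw [hzY_def, hzX_def]; ring
    rw [h1, norm_mul]
    have h2 : ‖Complex.exp ((t ^ 2 / 2 : ℝ) : ℂ)‖ = Real.exp (t ^ 2 / 2) := by
      rw [Complex.norm_exp, Complex.ofReal_re]
    rw [h2]
    calc ‖charFun' Y t - charFun' X t‖ * Real.exp (t ^ 2 / 2)
        ≤ (Kr * |t| ^ 3) * Real.exp (ρ ^ 2 / 2) := by
          apply mul_le_mul (hdiff t) hexpt (Real.exp_nonneg _)
          positivity
      _ = Kr * Real.exp (ρ ^ 2 / 2) * |t| ^ 3 := by ring
  have hzYX_small : ‖zY - zX‖ ≤ 1 / 100 := by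
    refine le_trans hzYX ?_
    calc Kr * Real.exp (ρ ^ 2 / 2) * |t| ^ 3 ≤ Kr * Real.exp (ρ ^ 2 / 2) * ρ ^ 3 := by
          apply mul_le_mul_of_nonneg_left htρ3
          positivity
      _ = Kr * ρ ^ 3 * Real.exp (ρ ^ 2 / 2) := by ring
      _ ≤ 1 / 100 := hsmall₂
  have hzY_one : ‖zY - 1‖ ≤ 3 / 100 := by
    calc ‖zY - 1‖ = ‖(zY - zX) + (zX - 1)‖ := by ring_nf
      _ ≤ ‖zY - zX‖ + ‖zX - 1‖ := norm_add_le _ _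
      _ ≤ 1 / 100 + 2 / 100 := add_le_add hzYX_small hzX_one
      _ = 3 / 100 := by norm_num
  have hzY_ne : zY ≠ 0 := by
    intro h
    rw [h] at hzY_one
    norm_num at hzY_one
  have hφY : charFun' Y t ≠ 0 := by
    intro h
    apply hzY_ne
    rw [hzY_def, h, zero_mul]
  refine ⟨hφY, ?_⟩
  -- Lipschitz bound for log on the closed ball of radius 3/100 around 1
  set s : Set ℂ := Metric.closedBall (1 : ℂ) (3 / 100) with hs_def
  have hmem : ∀ z : ℂ, ‖z - 1‖ ≤ 3 / 100 → z ∈ s := by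
    intro z hz
    rw [hs_def, Metric.mem_closedBall, dist_eq_norm]
    exact hz
  have hre : ∀ ζ ∈ s, (97 : ℝ) / 100 ≤ ζ.re := by
    intro ζ hζ
    have h1 : ‖ζ - 1‖ ≤ 3 / 100 := by
      rw [hs_def, Metric.mem_closedBall, dist_eq_norm] at hζ
      exact hζ
    have h2 : |(ζ - 1).re| ≤ ‖ζ - 1‖ := Complex.abs_re_le_norm _
    have h3 : (ζ - 1).re = ζ.re - 1 := by simp
    rw [h3] at h2
    have := abs_le.mp (le_trans h2 h1)
    linarith [this.1]
  have hder : ∀ ζ ∈ s, HasDerivWithinAt Complex.log ζ⁻¹ s ζ := by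
    intro ζ hζ
    refine (Complex.hasDerivAt_log ?_).hasDerivWithinAt
    rw [Complex.mem_slitPlane_iff]
    left
    linarith [hre ζ hζ]
  have hderb : ∀ ζ ∈ s, ‖ζ⁻¹‖ ≤ 2 := by
    intro ζ hζ
    rw [norm_inv]
    have h1 : (97 : ℝ) / 100 ≤ ‖ζ‖ := by
      have := Complex.abs_re_le_norm ζ
      have h2 := hre ζ hζ
      calc (97:ℝ)/100 ≤ ζ.re := h2
        _ ≤ |ζ.re| := le_abs_self _
        _ ≤ ‖ζ‖ := this
    have h2 : (0:ℝ) < 97/100 := by norm_num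
    calc ‖ζ‖⁻¹ ≤ ((97:ℝ)/100)⁻¹ := inv_anti₀ h2 h1
      _ ≤ 2 := by norm_num
  have hLip : ‖Complex.log zY - Complex.log zX‖ ≤ 2 * ‖zY - zX‖ :=
    Convex.norm_image_sub_le_of_norm_hasDerivWithin_le hder hderb
      (convex_closedBall _ _) (hmem zX (le_trans hzX_one (by norm_num))) (hmem zY hzY_one)
  calc ‖Complex.log zY‖ ≤ ‖Complex.log zX‖ + ‖Complex.log zY - Complex.log zX‖ := by
        have := norm_sub_norm_le (Complex.log zY) (Complex.log zX)
        linarith [norm_sub_rev (Complex.log zY) (Complex.log zX)]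
    _ ≤ N * |t| ^ 3 + 2 * (Kr * Real.exp (ρ ^ 2 / 2) * |t| ^ 3) := by
        refine add_le_add hlogX ?_
        calc ‖Complex.log zY - Complex.log zX‖ ≤ 2 * ‖zY - zX‖ := hLip
          _ ≤ 2 * (Kr * Real.exp (ρ ^ 2 / 2) * |t| ^ 3) := by linarith [hzYX]
    _ = (N + 2 * Kr * Real.exp (ρ ^ 2 / 2)) * |t| ^ 3 := by ring
end
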